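/- arXiv:math/0701324 — 3 statements merged into one kernel-verified Lean document; each statement's English description precedes it below -/
import Mathlib

section
/- Let Z be a Banach space with an FDD (E_i), let B_i ⊆ S_Z for each i ∈ ℕ and put B = ∏_{i=1}^∞ B_i, and let A ⊆ S_Z^ω. Assume that for every sequence ε̄ = (ε_i) ⊂ (0,1], Player I has a winning strategy WI(cl(A_ε̄), B), where cl denotes closure in the product of the discrete topology on S_Z. Then for every sequence ε̄ = (ε_i) ⊂ (0,1] there exists a blocking (G_i) of (E_i) such that every skipped block sequence (z_i) of (G_i) with z_i ∈ B_i for all i lies in cl(A_ε̄). -/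
/-! Common definitions for formalizing results of
E. Odell and Th. Schlumprecht,
"Embedding into Banach spaces with finite dimensional decompositions". -/

open Filter Topology
open scoped ENNReal NNReal

noncomputable section

namespace OS

/-! ### ℓ_p-type sums (with the sup-interpretation at `p = ∞`) -/

noncomputable def lpSumOn (p : ℝ≥0∞) {ι : Type*} (s : Finset ι) (r : ι → ℝ) : ℝ :=
  if p = ⊤ then ⨆ i ∈ s, |r i|
  else (∑ i ∈ s, |r i| ^ p.toReal) ^ (1 / p.toReal)

noncomputable def lpNormSeq (p : ℝ≥0∞) (r : ℕ → ℝ) : ℝ≥0∞ :=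
  if p = ⊤ then ⨆ i, ENNReal.ofReal |r i|
  else (∑' i, ENNReal.ofReal |r i| ^ p.toReal) ^ (1 / p.toReal)

noncomputable def lp2 (p : ℝ≥0∞) (s t : ℝ) : ℝ :=
  if p = ⊤ then max s t else (|s| ^ p.toReal + |t| ^ p.toReal) ^ (1 / p.toReal)

/-- a null sequence contained in `(0,1]` -/
def NullSeq01 (ε : ℕ → ℝ) : Prop :=
  (∀ i, 0 < ε i ∧ ε i ≤ 1) ∧ Tendsto ε atTop (𝓝 0)

/-- a sequence contained in `(0,1]` -/
def Seq01 (ε : ℕ → ℝ) : Prop := ∀ i, 0 < ε i ∧ ε i ≤ 1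

/-- `N` encodes a blocking of an FDD:  the `i`-th block of the blocking is
spanned by `E_j`, `N i ≤ j < N (i+1)` (everything 0-indexed). -/
def IsBlockingSeq (N : ℕ → ℕ) : Prop := N 0 = 0 ∧ StrictMono N

section Space

variable {Z : Type*} [NormedAddCommGroup Z] [NormedSpace ℝ Z]

/-! ### Finite dimensional decompositions -/

/-- `E` is a finite dimensional decomposition of `Z`:  every `z` has a unique
norm-convergent representation `z = ∑ zᵢ` with `zᵢ ∈ E i`. -/
structure IsFDD (E : ℕ → Submodule ℝ Z) : Prop where
  finiteDim : ∀ i, FiniteDimensional ℝ (E i)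
  nonzero : ∀ i, E i ≠ ⊥
  rep : ∀ z : Z, ∃! f : ℕ → Z, (∀ i, f i ∈ E i) ∧
    Tendsto (fun n => ∑ i ∈ Finset.range n, f i) atTop (𝓝 z)

namespace IsFDD

variable {E : ℕ → Submodule ℝ Z}

/-- the coordinates of `z` with respect to the FDD -/
def coord (h : IsFDD E) (z : Z) : ℕ → Z := (h.rep z).exists.choose

/-- the coordinate projection `P^E_I` -/
def proj (h : IsFDD E) (I : Finset ℕ) (z : Z) : Z := ∑ i ∈ I, h.coord z i

/-- the support `supp_E z` -/
def suppE (h : IsFDD E) (z : Z) : Set ℕ := {i | h.coord z i ≠ 0}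

/-- `z ∈ c₀₀(⊕ Eᵢ)` -/
def FinSupp (h : IsFDD E) (z : Z) : Prop := (h.suppE z).Finite

/-- the projection constant of the FDD is at most `K` -/
def ProjBound (h : IsFDD E) (K : ℝ) : Prop :=
  ∀ (m n : ℕ) (z : Z), ‖h.proj (Finset.Icc m n) z‖ ≤ K * ‖z‖

/-- `z` is a block sequence of `(Eᵢ)` -/
def IsBlockSeq (h : IsFDD E) (z : ℕ → Z) : Prop :=
  (∀ n, z n ≠ 0 ∧ h.FinSupp (z n)) ∧
  ∀ n, ∀ i ∈ h.suppE (z n), ∀ j ∈ h.suppE (z (n + 1)), i < j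

/-- `z` is a skipped block sequence of `(Eᵢ)` -/
def IsSkippedBlockSeq (h : IsFDD E) (z : ℕ → Z) : Prop :=
  (∀ n, z n ≠ 0 ∧ h.FinSupp (z n)) ∧
  (∀ i ∈ h.suppE (z 0), 0 < i) ∧
  ∀ n, ∀ i ∈ h.suppE (z n), ∀ j ∈ h.suppE (z (n + 1)), i + 1 < j

/-- `z` is a skipped block sequence of the blocking `Gᵢ = ⊕_{j ∈ [N i, N (i+1))} E_j`. -/
def IsSkippedBlockOfBlocking (h : IsFDD E) (N : ℕ → ℕ) (z : ℕ → Z) : Prop :=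
  (∀ n, z n ≠ 0 ∧ h.FinSupp (z n)) ∧
  ∃ a b : ℕ → ℕ, 0 < a 0 ∧ (∀ n, a n ≤ b n) ∧ (∀ n, b n + 1 < a (n + 1)) ∧
    ∀ n, h.suppE (z n) ⊆ Set.Ico (N (a n)) (N (b n + 1))

/-- `z` is a (normalized) `δ`-skipped block sequence of the blocking of `E` given by `N`. -/
def IsDeltaSkippedOfBlocking (h : IsFDD E) (N : ℕ → ℕ) (δ : ℕ → ℝ) (z : ℕ → Z) : Prop :=
  (∀ n, ‖z n‖ = 1) ∧
  ∃ k l : ℕ → ℕ, (∀ n, k n < l n) ∧ (∀ n, l n < k (n + 1)) ∧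
    ∀ n, ‖z n - h.proj (Finset.Ico (N (k n + 1)) (N (l n + 1))) (z n)‖ < δ n

/-- the FDD is shrinking:  every normalized block sequence is weakly null -/
def Shrinking (h : IsFDD E) : Prop :=
  ∀ z : ℕ → Z, h.IsBlockSeq z → (∀ n, ‖z n‖ = 1) →
    ∀ f : Z →L[ℝ] ℝ, Tendsto (fun n => f (z n)) atTop (𝓝 0)

/-- the FDD is boundedly complete (so that `Z = (Z^{(*)})^*`) -/
def BoundedlyComplete (h : IsFDD E) : Prop :=
  ∀ z : ℕ → Z, (∀ n, z n ∈ E n) →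
    (∃ M : ℝ, ∀ n, ‖∑ i ∈ Finset.range n, z i‖ ≤ M) →
    ∃ w : Z, Tendsto (fun n => ∑ i ∈ Finset.range n, z i) atTop (𝓝 w)

/-- (sequential) w*-convergence in `Z = (Z^{(*)})^*`:  for bounded sequences this is
coordinatewise convergence. -/
def WStarTendsto (h : IsFDD E) (z : ℕ → Z) (w : Z) : Prop :=
  (∃ M : ℝ, ∀ n, ‖z n‖ ≤ M) ∧
  ∀ i, Tendsto (fun n => h.coord (z n) i) atTop (𝓝 (h.coord w i))

/-- the unit ball of the subspace `X` is a w*-closed subset of `Z = (Z^{(*)})^*` -/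
def BallWStarClosed (h : IsFDD E) (X : Submodule ℝ Z) : Prop :=
  ∀ (z : ℕ → Z) (w : Z), (∀ n, z n ∈ X ∧ ‖z n‖ ≤ 1) → h.WStarTendsto z w →
    w ∈ X ∧ ‖w‖ ≤ 1

/-- `S` is a w*-closed subset of `Z = (Z^{(*)})^*` (sequentially) -/
def WStarClosedSet (h : IsFDD E) (S : Set Z) : Prop :=
  ∀ (z : ℕ → Z) (w : Z), (∀ n, z n ∈ S) → h.WStarTendsto z w → w ∈ S

/-- `(⊕_{i ≥ n} Eᵢ)_Z`, i.e. the vectors whose first `n` coordinates vanish -/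
def tail (h : IsFDD E) (n : ℕ) : Set Z := {z : Z | ∀ i < n, h.coord z i = 0}

/-- Condition (2.4.1) of Odell–Schlumprecht, with constant `C`.  Here
`X_m = X ∩ (⊕_{i ≥ m} Eᵢ)_Z` and `‖x‖_{X/X_m} = dist (x, X_m)`. -/
def Cond241 (h : IsFDD E) (X : Submodule ℝ Z) (C : ℝ) : Prop :=
  ∀ (m : ℕ) (ε : ℝ), 0 < ε → ∃ n, m ≤ n ∧ ∀ x ∈ X, ‖x‖ = (1 : ℝ) →
    Metric.infDist x ((X : Set Z) ∩ h.tail m) ≤ C * (‖h.proj (Finset.range n) x‖ + ε)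

/-- the FDD satisfies `C`-`(p,q)` estimates -/
def PQEstimates (h : IsFDD E) (p q : ℝ≥0∞) (C : ℝ) : Prop :=
  ∀ (n : ℕ) (x : ℕ → Z),
    (∀ i < n, x i ≠ 0 ∧ h.FinSupp (x i)) →
    (∀ i j, i < j → j < n → ∀ a ∈ h.suppE (x i), ∀ b ∈ h.suppE (x j), a < b) →
    C⁻¹ * lpSumOn p (Finset.range n) (fun i => ‖x i‖) ≤ ‖∑ i ∈ Finset.range n, x i‖ ∧
      ‖∑ i ∈ Finset.range n, x i‖ ≤ C * lpSumOn q (Finset.range n) (fun i => ‖x i‖)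

/-- the FDD is an asymptotic `ℓ_p` FDD -/
def AsymptoticLpFDD (h : IsFDD E) (p : ℝ≥0∞) : Prop :=
  ∃ C : ℝ, 1 ≤ C ∧ ∀ (n : ℕ) (x : ℕ → Z),
    (∀ i < n, h.FinSupp (x i) ∧ ‖x i‖ = 1) →
    (∀ i j, i < j → j < n → ∀ a ∈ h.suppE (x i), ∀ b ∈ h.suppE (x j), a < b) →
    (∀ j ∈ h.suppE (x 0), n ≤ j + 1) →
    ∀ a : ℕ → ℝ,
      C⁻¹ * lpSumOn p (Finset.range n) a ≤ ‖∑ i ∈ Finset.range n, a i • x i‖ ∧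
      ‖∑ i ∈ Finset.range n, a i • x i‖ ≤ C * lpSumOn p (Finset.range n) a

/-- the norm of `Z_p(F)`, where `F` is the blocking of `E` given by `N` -/
noncomputable def ZpNorm (h : IsFDD E) (p : ℝ≥0∞) (N : ℕ → ℕ) (z : Z) : ℝ≥0∞ :=
  ⨆ m : {m : ℕ → ℕ // IsBlockingSeq m},
    lpNormSeq p fun j => ‖h.proj (Finset.Ico (N (m.1 j)) (N (m.1 (j + 1)))) z‖

end IsFDD

/-! ### Trees indexed by `T_∞` (finite strictly increasing lists of naturals) -/

/-- the branch of the tree `x` along the strictly increasing sequence `φ`: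
`branchOf x φ i = x_{(φ 0, …, φ i)}` -/
def branchOf {X : Type*} (x : List ℕ → X) (φ : ℕ → ℕ) (i : ℕ) : X :=
  x ((List.range (i + 1)).map φ)

/-- all entries of the tree lie in the unit sphere -/
def TreeInSphere {X : Type*} [NormedAddCommGroup X] (x : List ℕ → X) : Prop :=
  ∀ l : List ℕ, l.Chain' (· < ·) → l ≠ [] → ‖x l‖ = 1

/-- the tree is weakly null:  every node converges weakly to `0` -/
def IsWeaklyNullTree {X : Type*} [NormedAddCommGroup X] [NormedSpace ℝ X]
    (x : List ℕ → X) : Prop :=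
  ∀ l : List ℕ, l.Chain' (· < ·) → ∀ f : X →L[ℝ] ℝ,
    Tendsto (fun n => f (x (l ++ [n]))) atTop (𝓝 0)

/-- a tree in a dual space is w*-null: every node converges pointwise to `0` -/
def IsWStarNullDualTree {X : Type*} [NormedAddCommGroup X] [NormedSpace ℝ X]
    (x : List ℕ → (X →L[ℝ] ℝ)) : Prop :=
  ∀ l : List ℕ, l.Chain' (· < ·) → ∀ v : X,
    Tendsto (fun n => x (l ++ [n]) v) atTop (𝓝 0)

/-- a block tree of the FDD:  every node is a block sequence of `(Eᵢ)` -/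
def IsBlockTree {E : ℕ → Submodule ℝ Z} (h : IsFDD E) (x : List ℕ → Z) : Prop :=
  (∀ l : List ℕ, l.Chain' (· < ·) → l ≠ [] → x l ≠ 0 ∧ h.FinSupp (x l)) ∧
  ∀ (l : List ℕ) (m n : ℕ), (l ++ [m]).Chain' (· < ·) → m < n →
    ∀ i ∈ h.suppE (x (l ++ [m])), ∀ j ∈ h.suppE (x (l ++ [n])), i < j

/-- a w*-null tree in `Z = (Z^{(*)})^*`:  every node converges coordinatewise to `0` -/
def IsWStarNullTree {E : ℕ → Submodule ℝ Z} (h : IsFDD E) (x : List ℕ → Z) : Prop :=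
  ∀ l : List ℕ, l.Chain' (· < ·) → ∀ i : ℕ,
    Tendsto (fun n => h.coord (x (l ++ [n])) i) atTop (𝓝 0)

/-! ### Sets of sequences, fattenings, closures -/

/-- the `ε`-fattening `A_ε` of `A` inside `S_Z^ω` -/
def fatten (A : Set (ℕ → Z)) (ε : ℕ → ℝ) : Set (ℕ → Z) :=
  {z | (∀ i, ‖z i‖ = 1) ∧ ∃ y ∈ A, ∀ i, ‖z i - y i‖ ≤ ε i}

/-- the fattening `A^X_ε = A_ε ∩ S_X^ω` -/
def fattenIn (X : Submodule ℝ Z) (A : Set (ℕ → Z)) (ε : ℕ → ℝ) : Set (ℕ → Z) :=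
  fatten A ε ∩ {z | ∀ i, z i ∈ X}

/-- closure in the product of the discrete topology -/
def discClosure {W : Type*} (A : Set (ℕ → W)) : Set (ℕ → W) :=
  {z | ∀ n : ℕ, ∃ y ∈ A, ∀ i < n, y i = z i}

/-! ### Games -/

/-- Player I has a winning strategy in the `(A, B)`-game (for the determined games we
consider):  every block tree of `(Eᵢ)` in `S_Z` all of whose branches lie in
`∏ᵢ B i` has a branch in `A`. -/
def WIGameFDD {E : ℕ → Submodule ℝ Z} (h : IsFDD E)
    (A : Set (ℕ → Z)) (B : ℕ → Set Z) : Prop :=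
  ∀ x : List ℕ → Z, IsBlockTree h x → TreeInSphere x →
    (∀ φ : ℕ → ℕ, StrictMono φ → ∀ i, branchOf x φ i ∈ B i) →
    ∃ φ : ℕ → ℕ, StrictMono φ ∧ branchOf x φ ∈ A

/-- Player I has a winning strategy in the `(A, Z)`-game for the subspace `X ⊆ Z`:
every tree in `S_X` with `x_{(α,n)} ∈ X_n = X ∩ (⊕_{i ≥ n} Eᵢ)_Z` has a branch in `A`. -/
def WIGameSub {E : ℕ → Submodule ℝ Z} (h : IsFDD E) (X : Submodule ℝ Z)
    (A : Set (ℕ → Z)) : Prop :=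
  ∀ x : List ℕ → Z,
    (∀ l : List ℕ, l.Chain' (· < ·) → l ≠ [] → x l ∈ X ∧ ‖x l‖ = 1) →
    (∀ (l : List ℕ) (n : ℕ), (l ++ [n]).Chain' (· < ·) → x (l ++ [n]) ∈ h.tail n) →
    ∃ φ : ℕ → ℕ, StrictMono φ ∧ branchOf x φ ∈ A

/-- Player I has a winning strategy for the game where Player I may only play the
subspaces `Y n`. -/
def WIGameYFam (X : Submodule ℝ Z) (Y : ℕ → Submodule ℝ Z) (A : Set (ℕ → Z)) : Prop :=
  ∀ x : List ℕ → Z,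
    (∀ l : List ℕ, l.Chain' (· < ·) → l ≠ [] → x l ∈ X ∧ ‖x l‖ = 1) →
    (∀ (l : List ℕ) (n : ℕ), (l ++ [n]).Chain' (· < ·) → x (l ++ [n]) ∈ Y n) →
    ∃ φ : ℕ → ℕ, StrictMono φ ∧ branchOf x φ ∈ A

end Space

/-- the closed finite codimensional subspaces of `X` -/
def cofSub (X : Type*) [NormedAddCommGroup X] [NormedSpace ℝ X] : Set (Submodule ℝ X) :=
  {Y | IsClosed (Y : Set X) ∧ FiniteDimensional ℝ (X ⧸ Y)}

section Space2

variable {Z : Type*} [NormedAddCommGroup Z] [NormedSpace ℝ Z]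

/-- the closed subspaces of `X` of finite codimension in `X` -/
def cofSubIn (X : Submodule ℝ Z) : Set (Submodule ℝ Z) :=
  {Y | Y ≤ X ∧ IsClosed (Y : Set Z) ∧
    ∃ F : Submodule ℝ Z, FiniteDimensional ℝ F ∧ Y ⊔ F = X}

/-- Player I has a winning strategy in the coordinate-free `A`-game on the subspace `X`:
Player I plays closed finite codimensional subspaces of `X`, Player II picks
norm-one vectors in them, and Player I wins if the resulting sequence lies in `A`. -/
def WIGameCofSub (X : Submodule ℝ Z) (A : Set (ℕ → Z)) : Prop :=
  ∃ σ : List Z → Submodule ℝ Z, (∀ lst, σ lst ∈ cofSubIn X) ∧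
    ∀ x : ℕ → Z, (∀ k, x k ∈ σ (List.ofFn fun i : Fin k => x i) ∧ ‖x k‖ = 1) → x ∈ A

/-- `X` (as a subspace of `Z`) satisfies `C`-`(p,1)`-w*-tree estimates -/
def SubTreeLowerWStarEst {E : ℕ → Submodule ℝ Z} (h : IsFDD E) (X : Submodule ℝ Z)
    (p : ℝ≥0∞) (C : ℝ) : Prop :=
  ∀ x : List ℕ → Z, (∀ l : List ℕ, l.Chain' (· < ·) → l ≠ [] → x l ∈ X ∧ ‖x l‖ = 1) →
    IsWStarNullTree h x →
    ∃ φ : ℕ → ℕ, StrictMono φ ∧ ∀ (s : Finset ℕ) (a : ℕ → ℝ),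
      C⁻¹ * lpSumOn p s a ≤ ‖∑ i ∈ s, a i • branchOf x φ i‖

end Space2

/-! ### Tree estimates -/

section TreeEst

variable (X : Type*) [NormedAddCommGroup X] [NormedSpace ℝ X]

/-- every weakly null tree in `S_X` has a branch `C`-dominating the `ℓ_p` unit vector basis -/
def TreeLowerEst (p : ℝ≥0∞) (C : ℝ) : Prop :=
  ∀ x : List ℕ → X, TreeInSphere x → IsWeaklyNullTree x →
    ∃ φ : ℕ → ℕ, StrictMono φ ∧ ∀ (s : Finset ℕ) (a : ℕ → ℝ),
      C⁻¹ * lpSumOn p s a ≤ ‖∑ i ∈ s, a i • branchOf x φ i‖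

/-- every weakly null tree in `S_X` has a branch `C`-dominated by the `ℓ_q` unit vector basis -/
def TreeUpperEst (q : ℝ≥0∞) (C : ℝ) : Prop :=
  ∀ x : List ℕ → X, TreeInSphere x → IsWeaklyNullTree x →
    ∃ φ : ℕ → ℕ, StrictMono φ ∧ ∀ (s : Finset ℕ) (a : ℕ → ℝ),
      ‖∑ i ∈ s, a i • branchOf x φ i‖ ≤ C * lpSumOn q s a

/-- `X` satisfies `C`-`(p,q)`-tree estimates -/
def TreePQEst (p q : ℝ≥0∞) (C : ℝ) : Prop :=
  ∀ x : List ℕ → X, TreeInSphere x → IsWeaklyNullTree x →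
    (∃ φ : ℕ → ℕ, StrictMono φ ∧ ∀ (s : Finset ℕ) (a : ℕ → ℝ),
      C⁻¹ * lpSumOn p s a ≤ ‖∑ i ∈ s, a i • branchOf x φ i‖) ∧
    (∃ φ : ℕ → ℕ, StrictMono φ ∧ ∀ (s : Finset ℕ) (a : ℕ → ℝ),
      ‖∑ i ∈ s, a i • branchOf x φ i‖ ≤ C * lpSumOn q s a)

/-- `X^*` satisfies `C`-`(p,1)`-w*-tree estimates -/
def DualTreeLowerWStarEst (p : ℝ≥0∞) (C : ℝ) : Prop :=
  ∀ x : List ℕ → (X →L[ℝ] ℝ), TreeInSphere x → IsWStarNullDualTree x →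
    ∃ φ : ℕ → ℕ, StrictMono φ ∧ ∀ (s : Finset ℕ) (a : ℕ → ℝ),
      C⁻¹ * lpSumOn p s a ≤ ‖∑ i ∈ s, a i • branchOf x φ i‖

end TreeEst

/-! ### Embeddings, quotients, reflexivity -/

def IsIsoEmbedding {X Y : Type*} [NormedAddCommGroup X] [NormedSpace ℝ X]
    [NormedAddCommGroup Y] [NormedSpace ℝ Y] (T : X →L[ℝ] Y) : Prop :=
  ∃ c : ℝ, 0 < c ∧ ∀ x : X, c * ‖x‖ ≤ ‖T x‖

def EmbedsInto (X Y : Type*) [NormedAddCommGroup X] [NormedSpace ℝ X]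
    [NormedAddCommGroup Y] [NormedSpace ℝ Y] : Prop :=
  ∃ T : X →L[ℝ] Y, IsIsoEmbedding T

def IsQuotientOf (X W : Type*) [NormedAddCommGroup X] [NormedSpace ℝ X]
    [NormedAddCommGroup W] [NormedSpace ℝ W] : Prop :=
  ∃ Q : W →L[ℝ] X, Function.Surjective Q

def IsReflexive (X : Type*) [NormedAddCommGroup X] [NormedSpace ℝ X] : Prop :=
  Function.Surjective (NormedSpace.inclusionInDoubleDual ℝ X)

/-- `X` contains an isomorphic copy of `ℓ₁` -/
def ContainsIsomorphicL1 (X : Type*) [NormedAddCommGroup X] [NormedSpace ℝ X] : Prop :=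
  ∃ (x : ℕ → X) (c : ℝ), 0 < c ∧ (∀ n, ‖x n‖ ≤ 1) ∧
    ∀ (s : Finset ℕ) (a : ℕ → ℝ), c * ∑ i ∈ s, |a i| ≤ ‖∑ i ∈ s, a i • x i‖

/-! ### Renormings and asymptotic moduli -/

section Norms

variable (X : Type*) [NormedAddCommGroup X] [NormedSpace ℝ X]

/-- `N` is an equivalent norm on `X` -/
def EquivNorm (N : Seminorm ℝ X) : Prop :=
  ∃ c C : ℝ, 0 < c ∧ ∀ x : X, c * ‖x‖ ≤ N x ∧ N x ≤ C * ‖x‖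

/-- the modulus `ρ̄_X(t)` of asymptotic uniform smoothness of the norm `N` -/
noncomputable def ausModulus (N : Seminorm ℝ X) (t : ℝ) : ℝ :=
  (⨆ x : {x : X // N x = 1}, ⨅ Y : ↥(cofSub X),
    ⨆ y : {y : X // y ∈ Y.1 ∧ N y ≤ t}, N (x.1 + y.1)) - 1

/-- the modulus `δ̄_X(t)` of asymptotic uniform convexity of the norm `N` -/
noncomputable def aucModulus (N : Seminorm ℝ X) (t : ℝ) : ℝ :=
  (⨅ x : {x : X // N x = 1}, ⨆ Y : ↥(cofSub X),
    ⨅ y : {y : X // y ∈ Y.1 ∧ t ≤ N y}, N (x.1 + y.1)) - 1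

/-- the norm `N` is asymptotically uniformly smooth -/
def IsAUS (N : Seminorm ℝ X) : Prop :=
  Tendsto (fun t => ausModulus X N t / t) (𝓝[>] (0 : ℝ)) (𝓝 0)

/-- the norm `N` is a.u.s. of power type `q` -/
def IsAUSPowerType (N : Seminorm ℝ X) (q : ℝ) : Prop :=
  ∃ K : ℝ, ∀ t : ℝ, 0 < t → ausModulus X N t ≤ K * t ^ q

/-- the norm `N` is asymptotically uniformly convex -/
def IsAUC (N : Seminorm ℝ X) : Prop := ∀ t : ℝ, 0 < t → 0 < aucModulus X N t

/-- the norm `N` is a.u.c. of power type `p` -/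
def IsAUCPowerType (N : Seminorm ℝ X) (p : ℝ) : Prop :=
  ∃ K : ℝ, 0 < K ∧ ∀ t : ℝ, 0 < t → t ≤ 1 → K * t ^ p ≤ aucModulus X N t

/-- the dual norm of `N` on `X^*` -/
noncomputable def dualSeminormFun (N : Seminorm ℝ X) (f : X →L[ℝ] ℝ) : ℝ :=
  ⨆ x : {x : X // N x ≤ 1}, |f x.1|

/-- the w*-closed finite codimensional subspaces of `X^*` (w*-closedness taken
sequentially on bounded sequences, which is equivalent for separable `X`) -/
def cofWStar : Set (Submodule ℝ (X →L[ℝ] ℝ)) :=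
  {Y | (∃ F : Submodule ℝ (X →L[ℝ] ℝ), FiniteDimensional ℝ F ∧ Y ⊔ F = ⊤) ∧
    ∀ (f : ℕ → X →L[ℝ] ℝ) (g : X →L[ℝ] ℝ), (∀ n, f n ∈ Y) →
      (∃ M : ℝ, ∀ n, ‖f n‖ ≤ M) →
      (∀ v : X, Tendsto (fun n => f n v) atTop (𝓝 (g v))) → g ∈ Y}

/-- the modulus `δ̄^*(t)` of w*-asymptotic uniform convexity of a norm `Nd` on `X^*` -/
noncomputable def aucStarModulus (Nd : (X →L[ℝ] ℝ) → ℝ) (t : ℝ) : ℝ :=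
  (⨅ f : {f : X →L[ℝ] ℝ // Nd f = 1}, ⨆ Y : ↥(cofWStar X),
    ⨅ g : {g : X →L[ℝ] ℝ // g ∈ Y.1 ∧ t ≤ Nd g}, Nd (f.1 + g.1)) - 1

/-- the renorming of `X` by `N` is w*-uniformly Kadec–Klee with modulus `δ` -/
def WStarUKKmod (N : Seminorm ℝ X) (δ : ℝ → ℝ) : Prop :=
  ∀ ε : ℝ, 0 < ε → ∀ (f : ℕ → X →L[ℝ] ℝ) (g : X →L[ℝ] ℝ),
    (∀ n, dualSeminormFun X N (f n) ≤ 1) →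
    (∀ v : X, Tendsto (fun n => f n v) atTop (𝓝 (g v))) →
    ε ≤ Filter.liminf (fun n => dualSeminormFun X N (f n - g)) atTop →
    dualSeminormFun X N g ≤ 1 - δ ε

/-- the norm `N` is uniformly convex -/
def UniformlyConvexNorm (N : Seminorm ℝ X) : Prop :=
  ∀ ε : ℝ, 0 < ε → ∃ δ : ℝ, 0 < δ ∧ ∀ x y : X,
    N x ≤ 1 → N y ≤ 1 → ε ≤ N (x - y) → N (x + y) / 2 ≤ 1 - δ

/-- `X` is superreflexive, i.e. admits an equivalent uniformly convex norm -/
def IsSuperreflexive : Prop :=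
  ∃ N : Seminorm ℝ X, EquivNorm X N ∧ UniformlyConvexNorm X N

end Norms

/-! ### The Szlenk index -/

section Szlenk

variable (X : Type*) [NormedAddCommGroup X] [NormedSpace ℝ X]

/-- one step of the Szlenk derivation (w*-convergence taken sequentially) -/
def szDeriv (ε : ℝ) (K : Set (X →L[ℝ] ℝ)) : Set (X →L[ℝ] ℝ) :=
  {g | g ∈ K ∧ ∃ f : ℕ → X →L[ℝ] ℝ, (∀ n, f n ∈ K) ∧
    (∀ v : X, Tendsto (fun n => f n v) atTop (𝓝 (g v))) ∧
    ε ≤ Filter.liminf (fun n => ‖f n - g‖) atTop}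

/-- the Szlenk sets `K_α(X, ε)` -/
noncomputable def szSet (ε : ℝ) (α : Ordinal.{0}) : Set (X →L[ℝ] ℝ) :=
  Ordinal.limitRecOn (motive := fun _ => Set (X →L[ℝ] ℝ)) α
    (Metric.closedBall 0 1)
    (fun _ K => szDeriv X ε K)
    (fun o _ ih => ⋂ (β : Ordinal.{0}) (h : β < o), ih β h)

open scoped Classical in
/-- `Sz(X, ε)`:  the least `α` with `K_α(X, ε) = ∅`, and `ω₁` if there is none -/
noncomputable def szIndexEps (ε : ℝ) : Ordinal.{0} :=
  if ({α : Ordinal.{0} | szSet X ε α = ∅}).Nonempty then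
    sInf {α : Ordinal.{0} | szSet X ε α = ∅}
  else (Cardinal.aleph 1).ord

/-- the Szlenk index `Sz(X)` -/
noncomputable def szIndex : Ordinal.{0} :=
  ⨆ ε : ↥(Set.Ioo (0 : ℝ) 1), szIndexEps X ε.1

end Szlenk

/-! ### Asymptotic structure -/

section Asymp

variable (X : Type*) [NormedAddCommGroup X] [NormedSpace ℝ X]

/-- `(e i)` (a finite sequence in some normed space `V`) belongs to the `n`-th
asymptotic structure `{X}_n` of `X`:  it is a normalized monotone basis, and for each
`ε > 0` Player II has a winning strategy (given by `t`, a function of the history of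
Player I's moves) in the `n`-step subspace game producing a sequence
`(1+ε)`-equivalent to `(e i)`. -/
def InAsympStructure {V : Type*} [NormedAddCommGroup V] [NormedSpace ℝ V]
    (n : ℕ) (e : Fin n → V) : Prop :=
  (∀ i, ‖e i‖ = 1) ∧ LinearIndependent ℝ e ∧
  (∀ (a : Fin n → ℝ) (k m : ℕ), k ≤ m →
    ‖∑ i ∈ Finset.univ.filter (fun i : Fin n => (i : ℕ) < k), a i • e i‖ ≤
      ‖∑ i ∈ Finset.univ.filter (fun i : Fin n => (i : ℕ) < m), a i • e i‖) ∧
  ∀ ε : ℝ, 0 < ε → ∃ t : List (Submodule ℝ X) → X,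
    ∀ Y : Fin n → Submodule ℝ X, (∀ i, Y i ∈ cofSub X) →
      ∀ xx : Fin n → X,
        (∀ i : Fin n, xx i = t (List.ofFn fun j : Fin (i.1 + 1) => Y (Fin.castLE i.isLt j))) →
        (∀ i, xx i ∈ Y i ∧ ‖xx i‖ = 1) ∧
        ∀ a : Fin n → ℝ,
          ‖∑ i, a i • e i‖ ≤ (1 + ε) * ‖∑ i, a i • xx i‖ ∧
          ‖∑ i, a i • xx i‖ ≤ (1 + ε) * ‖∑ i, a i • e i‖

/-- `X` is an asymptotic `ℓ_p` space -/
def IsAsymptoticLpSpace (p : ℝ≥0∞) : Prop :=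
  ∃ C : ℝ, 1 ≤ C ∧ ∀ (n : ℕ) (V : Type) [NormedAddCommGroup V] [NormedSpace ℝ V]
    (e : Fin n → V), InAsympStructure X n e →
      ∀ a : Fin n → ℝ,
        C⁻¹ * lpSumOn p Finset.univ a ≤ ‖∑ i, a i • e i‖ ∧
        ‖∑ i, a i • e i‖ ≤ C * lpSumOn p Finset.univ a

end Asymp

/-! ### Unconditional bases -/

section Bases

variable {V : Type*} [NormedAddCommGroup V] [NormedSpace ℝ V]

/-- `y` is a normalized block basis of `(v i)` -/
def IsNormalizedBlockBasis (v : ℕ → V) (y : ℕ → V) : Prop :=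
  ∃ (s : ℕ → Finset ℕ) (b : ℕ → ℝ),
    (∀ n, (s n).Nonempty) ∧
    (∀ n, ∀ i ∈ s n, ∀ j ∈ s (n + 1), i < j) ∧
    (∀ n, y n = ∑ i ∈ s n, b i • v i) ∧ ∀ n, ‖y n‖ = 1

/-- `(v i)` is a regular normalized `1`-unconditional basic sequence -/
def RegularBasis (v : ℕ → V) : Prop :=
  (∀ i, ‖v i‖ = 1) ∧
  (∀ (s : Finset ℕ) (a ε : ℕ → ℝ), (∀ i, |ε i| ≤ 1) →
    ‖∑ i ∈ s, (ε i * a i) • v i‖ ≤ ‖∑ i ∈ s, a i • v i‖) ∧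
  (∀ y : ℕ → V, IsNormalizedBlockBasis v y → ∃ C : ℝ, ∀ (s : Finset ℕ) (a : ℕ → ℝ),
    ‖∑ i ∈ s, a i • v i‖ ≤ C * ‖∑ i ∈ s, a i • y i‖) ∧
  (∃ c : ℝ, 0 < c ∧ ∀ (n : ℕ) (s : Finset ℕ) (a : ℕ → ℝ),
    c * ‖∑ i ∈ s, a i • v i‖ ≤ ‖∑ i ∈ s, a i • v (i + n)‖) ∧
  (∃ d : ℝ, 0 < d ∧ ∀ m : ℕ, ∃ L, m ≤ L ∧ ∀ k ≤ m, ∀ (s : Finset ℕ) (a : ℕ → ℝ),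
    (∀ i ∈ s, L < i) → d * ‖∑ i ∈ s, a i • v i‖ ≤ ‖∑ i ∈ s, a i • v (i - k)‖)

end Bases

/-! ### Bundled Banach spaces -/

structure BanachSp where
  carrier : Type*
  [nacg : NormedAddCommGroup carrier]
  [nsp : NormedSpace ℝ carrier]
  [complete : CompleteSpace carrier]

attribute [instance] BanachSp.nacg BanachSp.nsp BanachSp.complete

/-- a Banach space together with an FDD -/
structure BanachFDD extends BanachSp where
  E : ℕ → Submodule ℝ carrier
  isFDD : IsFDD E

/-- abstract norms -/
structure IsNormOn (W : Type*) [AddCommGroup W] [Module ℝ W] (N : W → ℝ) : Prop where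
  pos : ∀ w : W, w ≠ 0 → 0 < N w
  zero : N 0 = 0
  smul : ∀ (a : ℝ) (w : W), N (a • w) = |a| * N w
  add : ∀ w w' : W, N (w + w') ≤ N w + N w'

/-- conclusion of Lemma 2.7 of Odell–Schlumprecht for the isometric embedding
`T : X → W` and the decreasing sequence `(Y n)` -/
def L27Conclusion {X : Type*} [NormedAddCommGroup X] [NormedSpace ℝ X]
    (Y : ℕ → Submodule ℝ X) (W : BanachFDD) (T : X →ₗᵢ[ℝ] W.carrier) : Prop :=
  Dense {x : X | W.isFDD.FinSupp (T x)} ∧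
  (∀ (n : ℕ) (x : X), T x ∈ W.isFDD.tail n → x ∈ Y n) ∧
  ∃ c : ℝ, 0 < c ∧ ∀ n : ℕ, ∃ D : Finset (W.carrier →L[ℝ] ℝ),
    (∀ f ∈ D, ‖f‖ = 1 ∧ ∀ w ∈ W.isFDD.tail n, f w = 0) ∧
    ∀ x : X, ∃ f ∈ D, Metric.infDist x (Y n : Set X) ≤ c * f (T x)

instance : Fact ((1 : ℝ≥0∞) ≤ 2) := ⟨one_le_two⟩
instance : Fact ((1 : ℝ≥0∞) ≤ ⊤) := ⟨le_top⟩


/-! ### Auxiliary machinery for the proof of Theorem 2.2 -/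

section Aux22
set_option linter.unusedSectionVars false

variable {Z : Type*} [NormedAddCommGroup Z] [NormedSpace ℝ Z]

namespace IsFDD

variable {E : ℕ → Submodule ℝ Z}

theorem coord_mem (h : IsFDD E) (z : Z) (i : ℕ) : h.coord z i ∈ E i :=
  ((h.rep z).exists.choose_spec).1 i

theorem coord_tendsto (h : IsFDD E) (z : Z) :
    Tendsto (fun n => ∑ i ∈ Finset.range n, h.coord z i) atTop (𝓝 z) :=
  ((h.rep z).exists.choose_spec).2

theorem eq_sum_range (h : IsFDD E) {v : Z} {n₀ : ℕ} (hn : ∀ j ∈ h.suppE v, j < n₀) :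
    v = ∑ i ∈ Finset.range n₀, h.coord v i := by
  have h1 := h.coord_tendsto v
  have heq : (fun n => ∑ i ∈ Finset.range n, h.coord v i) =ᶠ[atTop]
      (fun _ : ℕ => ∑ i ∈ Finset.range n₀, h.coord v i) := by
    filter_upwards [eventually_ge_atTop n₀] with n hn'
    refine (Finset.sum_subset (Finset.range_subset_range.2 hn') ?_).symm
    intro i hi hni
    by_contra h0
    have hmem : i ∈ h.suppE v := h0
    have := hn i hmem
    simp only [Finset.mem_range] at hni
    omega
  exact tendsto_nhds_unique (h1.congr' heq) tendsto_const_nhds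

theorem mem_finset_sup (h : IsFDD E) {v : Z} {s : Finset ℕ}
    (hs : ∀ j ∈ h.suppE v, j ∈ s) : v ∈ s.sup E := by
  have hn : ∀ j ∈ h.suppE v, j < (s.sup id) + 1 := fun j hj =>
    Nat.lt_succ_of_le (Finset.le_sup (f := id) (hs j hj))
  rw [show v = _ from h.eq_sum_range hn]
  refine Submodule.sum_mem _ fun i _ => ?_
  by_cases h0 : h.coord v i = 0
  · exact h0 ▸ (s.sup E).zero_mem
  · exact SetLike.le_def.1 (Finset.le_sup (hs i h0)) (h.coord_mem v i)

theorem exists_net (h : IsFDD E) (S : Set Z) (b : ℕ)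
    (hS1 : ∀ v ∈ S, ‖v‖ = 1) (hS2 : ∀ v ∈ S, ∀ j ∈ h.suppE v, j < b)
    {δ : ℝ} (hδ : 0 < δ) :
    ∃ t : Finset Z, ↑t ⊆ S ∧ ∀ v ∈ S, ∃ u ∈ t, dist v u < δ := by
  classical
  haveI := h.finiteDim
  haveI : FiniteDimensional ℝ ↥((Finset.range b).sup E) :=
    Submodule.finiteDimensional_finset_sup _ _
  have hSF : ∀ v ∈ S, v ∈ (Finset.range b).sup E := fun v hv =>
    h.mem_finset_sup (fun j hj => Finset.mem_range.2 (hS2 v hv j hj))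
  have hK : IsCompact (((Finset.range b).sup E).subtypeL ''
      (Metric.closedBall (0 : ↥((Finset.range b).sup E)) 1)) :=
    (isCompact_closedBall _ _).image ((Finset.range b).sup E).subtypeL.continuous
  have hsub : S ⊆ ((Finset.range b).sup E).subtypeL ''
      (Metric.closedBall (0 : ↥((Finset.range b).sup E)) 1) := by
    intro v hv
    refine ⟨⟨v, hSF v hv⟩, ?_, rfl⟩
    simp only [Metric.mem_closedBall, dist_zero_right]
    calc ‖(⟨v, hSF v hv⟩ : ↥((Finset.range b).sup E))‖ = ‖v‖ := rfl
    _ ≤ 1 := le_of_eq (hS1 v hv)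
  have htb : TotallyBounded S := hK.totallyBounded.subset hsub
  obtain ⟨t, hts, htf, hcov⟩ :=
    (totallyBounded_iff_subset.1 htb) _ (Metric.dist_mem_uniformity hδ)
  refine ⟨htf.toFinset, by simpa using hts, fun v hv => ?_⟩
  obtain ⟨u, hut, hdu⟩ := Set.mem_iUnion₂.1 (hcov hv)
  exact ⟨u, by simpa using hut, hdu⟩

end IsFDD

/-- a finite position is viable for `A'` if some member of `A'` extends it -/
def OSviable (A' : Set (ℕ → Z)) (p : List Z) : Prop :=
  ∃ y ∈ A', ∀ i < p.length, y i = p.getD i 0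

theorem OSviable_of_append {A' : Set (ℕ → Z)} {p q : List Z}
    (hpq : OSviable A' (p ++ q)) : OSviable A' p := by
  obtain ⟨y, hy, hagree⟩ := hpq
  refine ⟨y, hy, fun i hi => ?_⟩
  rw [hagree i (by rw [List.length_append]; omega), List.getD_append _ _ _ _ hi]

def OSPsi (M : ℕ → ℕ → Z → Prop) (A' : Set (ℕ → Z)) (S : Set (List Z)) : Set (List Z) :=
  {p | ¬ OSviable A' p ∨ ∀ n : ℕ, ∃ v : Z, M p.length n v ∧ p ++ [v] ∈ S}

noncomputable def OSR (M : ℕ → ℕ → Z → Prop) (A' : Set (ℕ → Z)) : Ordinal.{0} → Set (List Z) :=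
  Ordinal.lt_wf.fix fun α rec => OSPsi M A' (⋃ β : {β : Ordinal.{0} // β < α}, rec β.1 β.2)

theorem OSR_eq (M : ℕ → ℕ → Z → Prop) (A' : Set (ℕ → Z)) (α : Ordinal.{0}) :
    OSR M A' α = OSPsi M A' (⋃ β : {β : Ordinal.{0} // β < α}, OSR M A' β.1) :=
  Ordinal.lt_wf.fix_eq _ α

def OSEsc (M : ℕ → ℕ → Z → Prop) (A' : Set (ℕ → Z)) : Set (List Z) :=
  {p | ∃ α : Ordinal.{0}, p ∈ OSR M A' α}

theorem OSR_of_not_viable {M : ℕ → ℕ → Z → Prop} {A' : Set (ℕ → Z)} {p : List Z}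
    (hp : ¬ OSviable A' p) (α : Ordinal.{0}) : p ∈ OSR M A' α := by
  rw [OSR_eq]; exact Or.inl hp

theorem OSviable_of_not_esc {M : ℕ → ℕ → Z → Prop} {A' : Set (ℕ → Z)} {p : List Z}
    (hp : p ∉ OSEsc M A') : OSviable A' p :=
  by_contra fun hv => hp ⟨0, OSR_of_not_viable hv 0⟩

theorem OSesc_step_not {M : ℕ → ℕ → Z → Prop} {A' : Set (ℕ → Z)} {p : List Z}
    (hp : p ∉ OSEsc M A') :
    ∃ n : ℕ, ∀ v : Z, M p.length n v → p ++ [v] ∉ OSEsc M A' := by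
  by_contra hcon
  push_neg at hcon
  choose vf hvM hvE using hcon
  choose αf hαf using hvE
  apply hp
  refine ⟨(⨆ n, αf n) + 1, ?_⟩
  rw [OSR_eq]
  refine Or.inr fun n => ⟨vf n, hvM n, Set.mem_iUnion.2 ⟨⟨αf n, ?_⟩, hαf n⟩⟩
  calc αf n ≤ ⨆ n, αf n := Ordinal.le_iSup _ n
  _ < (⨆ n, αf n) + 1 := by
      rw [Ordinal.add_one_eq_succ]; exact Order.lt_succ _

open Classical in
noncomputable def OSrk (M : ℕ → ℕ → Z → Prop) (A' : Set (ℕ → Z)) (p : List Z) : Ordinal.{0} :=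
  if hp : p ∈ OSEsc M A' then Ordinal.lt_wf.min {α | p ∈ OSR M A' α} hp else 0

theorem OSrk_mem {M : ℕ → ℕ → Z → Prop} {A' : Set (ℕ → Z)} {p : List Z}
    (hp : p ∈ OSEsc M A') : p ∈ OSR M A' (OSrk M A' p) := by
  rw [OSrk, dif_pos hp]; exact Ordinal.lt_wf.min_mem _ hp

theorem OSrk_le {M : ℕ → ℕ → Z → Prop} {A' : Set (ℕ → Z)} {p : List Z} {β : Ordinal.{0}}
    (hp : p ∈ OSR M A' β) : OSrk M A' p ≤ β := by
  rw [OSrk, dif_pos ⟨β, hp⟩]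
  exact not_lt.1 (Ordinal.lt_wf.not_lt_min _ hp)

theorem OSesc_descent {M : ℕ → ℕ → Z → Prop} {A' : Set (ℕ → Z)} {p : List Z}
    (hp : p ∈ OSEsc M A') (hv : OSviable A' p) (n : ℕ) :
    ∃ v : Z, M p.length n v ∧ p ++ [v] ∈ OSEsc M A' ∧
      OSrk M A' (p ++ [v]) < OSrk M A' p := by
  have hmem := OSrk_mem hp
  rw [OSR_eq] at hmem
  rcases hmem with hbad | hstep
  · exact absurd hv hbad
  · obtain ⟨v, hM, hmem⟩ := hstep n
    obtain ⟨⟨β, hβ⟩, hmemβ⟩ := Set.mem_iUnion.1 hmem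
    exact ⟨v, hM, ⟨β, hmemβ⟩, lt_of_le_of_lt (OSrk_le hmemβ) hβ⟩

/-! trees built from a successor function -/

def OSpr (f : List Z → ℕ → Z) : List ℕ → List Z
  | [] => []
  | n :: r => OSpr f r ++ [f (OSpr f r) n]

def OSpath (f : List Z → ℕ → Z) (l : List ℕ) : List Z := OSpr f l.reverse

def OStree (f : List Z → ℕ → Z) (l : List ℕ) : Z := (OSpath f l).getLastD 0

theorem OSpath_snoc (f : List Z → ℕ → Z) (l : List ℕ) (n : ℕ) :
    OSpath f (l ++ [n]) = OSpath f l ++ [f (OSpath f l) n] := by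
  simp [OSpath, OSpr]

theorem OSpr_length (f : List Z → ℕ → Z) (r : List ℕ) : (OSpr f r).length = r.length := by
  induction r with
  | nil => rfl
  | cons n r ih => simp [OSpr, ih]

theorem OSpath_length (f : List Z → ℕ → Z) (l : List ℕ) :
    (OSpath f l).length = l.length := by
  simp [OSpath, OSpr_length]

theorem OStree_snoc (f : List Z → ℕ → Z) (l : List ℕ) (n : ℕ) :
    OStree f (l ++ [n]) = f (OSpath f l) n := by
  rw [OStree, OSpath_snoc, List.getLastD_concat]

theorem OSpath_snoc_range (f : List Z → ℕ → Z) (φ : ℕ → ℕ) (k : ℕ) :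
    OSpath f ((List.range (k+1)).map φ) =
      OSpath f ((List.range k).map φ) ++ [f (OSpath f ((List.range k).map φ)) (φ k)] := by
  rw [List.range_succ, List.map_append, List.map_cons, List.map_nil]
  exact OSpath_snoc f _ _

theorem OStree_range_succ (f : List Z → ℕ → Z) (φ : ℕ → ℕ) (k : ℕ) :
    OStree f ((List.range (k+1)).map φ) = f (OSpath f ((List.range k).map φ)) (φ k) := by
  rw [List.range_succ, List.map_append, List.map_cons, List.map_nil]
  exact OStree_snoc f _ _

theorem OSpath_getD (f : List Z → ℕ → Z) (φ : ℕ → ℕ) :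
    ∀ k i, i < k → (OSpath f ((List.range k).map φ)).getD i 0 =
      OStree f ((List.range (i+1)).map φ) := by
  intro k
  induction k with
  | zero => intro i hi; omega
  | succ k ih =>
    intro i hi
    rw [OSpath_snoc_range]
    rcases Nat.lt_or_ge i k with hik | hik
    · rw [List.getD_append _ _ _ _ (by rw [OSpath_length, List.length_map, List.length_range]; omega)]
      exact ih i hik
    · have hik' : i = k := by omega
      subst hik'
      have hlen : (OSpath f ((List.range i).map φ)).length = i := by
        rw [OSpath_length, List.length_map, List.length_range]
      rw [List.getD_append_right _ _ _ _ (by omega), hlen, Nat.sub_self]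
      rw [OStree_range_succ]
      rfl

theorem OS_eventually_bad {M : ℕ → ℕ → Z → Prop} {A' : Set (ℕ → Z)} {f : List Z → ℕ → Z}
    (hstep : ∀ (p : List Z) (n : ℕ), p ∈ OSEsc M A' → OSviable A' p →
      p ++ [f p n] ∈ OSEsc M A' ∧ OSrk M A' (p ++ [f p n]) < OSrk M A' p)
    (h0 : ([] : List Z) ∈ OSEsc M A') (φ : ℕ → ℕ) :
    ∃ k, ¬ OSviable A' (OSpath f ((List.range k).map φ)) := by
  by_contra hcon
  push_neg at hcon
  have hindE : ∀ k, OSpath f ((List.range k).map φ) ∈ OSEsc M A' := by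
    intro k
    induction k with
    | zero => exact h0
    | succ k ih =>
      rw [OSpath_snoc_range]
      exact (hstep _ (φ k) ih (hcon k)).1
  have hdec : ∀ k, OSrk M A' (OSpath f ((List.range (k+1)).map φ)) <
      OSrk M A' (OSpath f ((List.range k).map φ)) := by
    intro k
    rw [OSpath_snoc_range]
    exact (hstep _ (φ k) (hindE k) (hcon k)).2
  obtain ⟨k0, hk0⟩ := Ordinal.lt_wf.min_mem
    (Set.range fun k => OSrk M A' (OSpath f ((List.range k).map φ))) ⟨_, ⟨0, rfl⟩⟩
  exact Ordinal.lt_wf.not_lt_min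
    (Set.range fun k => OSrk M A' (OSpath f ((List.range k).map φ)))
    ⟨k0 + 1, rfl⟩ (hk0 ▸ hdec k0)

/-! bounds for sibling supports -/

def OSbnd (spp : Z → Finset ℕ) (pk : List Z → ℕ → Z) (p : List Z) : ℕ → ℕ
  | 0 => 0
  | n + 1 => max (OSbnd spp pk p n) ((spp (pk p (OSbnd spp pk p n))).sup id) + 1

theorem OSbnd_strictMono (spp : Z → Finset ℕ) (pk : List Z → ℕ → Z) (p : List Z) :
    StrictMono (OSbnd spp pk p) :=
  strictMono_nat_of_lt_succ fun _ => Nat.lt_succ_of_le (le_max_left _ _)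

theorem OSbnd_sup_lt (spp : Z → Finset ℕ) (pk : List Z → ℕ → Z) (p : List Z) (n : ℕ) :
    (spp (pk p (OSbnd spp pk p n))).sup id < OSbnd spp pk p (n + 1) :=
  Nat.lt_succ_of_le (le_max_right _ _)

/-! recursive blocking -/

def OSH (step : (ℕ → ℕ) → ℕ → ℕ) : ℕ → ℕ → ℕ
  | 0, _ => 0
  | k + 1, j => if j ≤ k then OSH step k j else max (OSH step k k + 1) (step (OSH step k) k)

def OSN (step : (ℕ → ℕ) → ℕ → ℕ) (k : ℕ) : ℕ := OSH step k k

theorem OSH_agree (step : (ℕ → ℕ) → ℕ → ℕ) :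
    ∀ m j, j ≤ m → OSH step m j = OSN step j := by
  intro m
  induction m with
  | zero => intro j hj; obtain rfl : j = 0 := Nat.le_zero.mp hj; rfl
  | succ k ih =>
    intro j hj
    rcases Nat.lt_or_ge j (k + 1) with hlt | hge
    · rw [show OSH step (k+1) j = if j ≤ k then OSH step k j else _ from rfl,
        if_pos (by omega)]
      exact ih j (by omega)
    · have hj1 : j = k + 1 := by omega
      subst hj1; rfl

theorem OSN_zero (step : (ℕ → ℕ) → ℕ → ℕ) : OSN step 0 = 0 := rfl

theorem OSN_succ_ge (step : (ℕ → ℕ) → ℕ → ℕ) (k : ℕ) :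
    OSN step k + 1 ≤ OSN step (k + 1) := by
  show _ ≤ OSH step (k+1) (k+1)
  rw [show OSH step (k+1) (k+1) = if k+1 ≤ k then OSH step k (k+1) else
    max (OSH step k k + 1) (step (OSH step k) k) from rfl, if_neg (by omega)]
  exact le_max_left _ _

theorem OSN_strictMono (step : (ℕ → ℕ) → ℕ → ℕ) : StrictMono (OSN step) :=
  strictMono_nat_of_lt_succ fun k => OSN_succ_ge step k

theorem OSN_step_le (step : (ℕ → ℕ) → ℕ → ℕ) (k : ℕ) :
    step (OSH step k) k ≤ OSN step (k + 1) := by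
  show _ ≤ OSH step (k+1) (k+1)
  rw [show OSH step (k+1) (k+1) = if k+1 ≤ k then OSH step k (k+1) else
    max (OSH step k k + 1) (step (OSH step k) k) from rfl, if_neg (by omega)]
  exact le_max_right _ _

/-! finite sets of lists -/

noncomputable def OSLs (U : ℕ → Finset Z) : ℕ → Finset (List Z)
  | 0 => {[]}
  | j + 1 =>
    letI := Classical.decEq (List Z)
    (OSLs U j).biUnion fun p => (U j).image fun v => p ++ [v]

theorem OSLs_mem {U : ℕ → Finset Z} {j : ℕ} {p : List Z} {v : Z}
    (hp : p ∈ OSLs U j) (hv : v ∈ U j) : p ++ [v] ∈ OSLs U (j + 1) := by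
  letI := Classical.decEq (List Z)
  simp only [OSLs]
  rw [Finset.mem_biUnion]
  exact ⟨p, hp, Finset.mem_image.2 ⟨v, hv, rfl⟩⟩

end Aux22



/-- **Theorem 2.2** (Odell–Schlumprecht).  Let `Z` be a Banach space with an FDD `(Eᵢ)`,
let `B i ⊆ S_Z` and `A ⊆ S_Z^ω`.  If for every `ε̄ ⊂ (0,1]` Player I has a winning
strategy `WI(cl(A_ε̄), B)`, then for every `ε̄ ⊂ (0,1]` there is a blocking `(Gᵢ)` of
`(Eᵢ)` such that every skipped block sequence of `(Gᵢ)` with terms in the `B i` lies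
in `cl(A_ε̄)`. -/
theorem statement0 {Z : Type*} [NormedAddCommGroup Z] [NormedSpace ℝ Z] [CompleteSpace Z]
    {E : ℕ → Submodule ℝ Z} (h : IsFDD E)
    (B : ℕ → Set Z) (hB : ∀ i, B i ⊆ {z : Z | ‖z‖ = 1})
    (A : Set (ℕ → Z)) (hA : A ⊆ {z : ℕ → Z | ∀ i, ‖z i‖ = 1})
    (hWI : ∀ ε : ℕ → ℝ, Seq01 ε → WIGameFDD h (discClosure (fatten A ε)) B) :
    ∀ ε : ℕ → ℝ, Seq01 ε →
      ∃ N : ℕ → ℕ, IsBlockingSeq N ∧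
        ∀ z : ℕ → Z, h.IsSkippedBlockOfBlocking N z → (∀ i, z i ∈ B i) →
          z ∈ discClosure (fatten A ε) := by
  intro ε hε
  classical
  by_cases hvac : ∃ i M₀, ∀ v : Z, v ∈ B i → h.FinSupp v → ¬ ∀ j ∈ h.suppE v, M₀ < j
  · -- degenerate case: conclusion is vacuous for a suitable blocking
    obtain ⟨i0, M0, hM0⟩ := hvac
    refine ⟨fun j => (M0 + 1) * j, ⟨by simp, ?_⟩, ?_⟩
    · intro s t hst
      exact mul_lt_mul_of_pos_left hst (by omega)
    · rintro z ⟨hz1, a, b, ha0, hab, hskip, hsupp⟩ hzB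
      exfalso
      apply hM0 (z i0) (hzB i0) (hz1 i0).2
      intro j hj
      have h1 : (M0 + 1) * a i0 ≤ j := (hsupp i0 hj).1
      have h2 : 1 ≤ a i0 := by
        cases i0 with
        | zero => omega
        | succ t => have := hskip t; omega
      have h3 : M0 + 1 ≤ (M0 + 1) * a i0 := le_mul_of_one_le_right (by omega) h2
      have h4 : M0 + 1 ≤ j := le_trans h3 h1
      omega
  · push_neg at hvac
    -- hvac : ∀ i M₀, ∃ v, v ∈ B i ∧ h.FinSupp v ∧ ∀ j ∈ h.suppE v, M₀ < j
    set ε' : ℕ → ℝ := fun i => ε i / 2 with hε'def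
    have hε'app : ∀ i, ε' i = ε i / 2 := fun _ => rfl
    have hε' : Seq01 ε' := fun i =>
      ⟨half_pos (hε i).1, by rw [hε'app]; linarith [(hε i).2, (hε i).1]⟩
    set A' : Set (ℕ → Z) := fatten A ε' with hA'def
    set Mov : ℕ → ℕ → Z → Prop :=
      fun k n v => v ∈ B k ∧ h.FinSupp v ∧ ∀ j ∈ h.suppE v, n < j with hMovdef
    by_cases hEsc : ([] : List Z) ∈ OSEsc Mov A'
    · -- Player II could escape: build a block tree contradicting `hWI`
      exfalso
      have hpick : ∀ (p : List Z) (n : ℕ), ∃ v : Z, Mov p.length n v ∧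
          (p ∈ OSEsc Mov A' → OSviable A' p →
            (p ++ [v] ∈ OSEsc Mov A' ∧ OSrk Mov A' (p ++ [v]) < OSrk Mov A' p)) := by
        intro p n
        by_cases hp : p ∈ OSEsc Mov A' ∧ OSviable A' p
        · obtain ⟨v, hM, hE, hlt⟩ := OSesc_descent hp.1 hp.2 n
          exact ⟨v, hM, fun _ _ => ⟨hE, hlt⟩⟩
        · obtain ⟨v, h1, h2, h3⟩ := hvac p.length n
          exact ⟨v, ⟨h1, h2, h3⟩, fun he hv => absurd ⟨he, hv⟩ hp⟩
      choose pk hpkM hpkE using hpick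
      set spp : Z → Finset ℕ :=
        fun v => if hv : (h.suppE v).Finite then hv.toFinset else ∅ with hsppdef
      set f : List Z → ℕ → Z := fun p n => pk p (OSbnd spp pk p n) with hfdef
      have hfM : ∀ (p : List Z) (n : ℕ), Mov p.length (OSbnd spp pk p n) (f p n) :=
        fun p n => hpkM p (OSbnd spp pk p n)
      have hfB : ∀ p n, f p n ∈ B p.length := fun p n => (hfM p n).1
      have hffin : ∀ p n, h.FinSupp (f p n) := fun p n => (hfM p n).2.1
      have hfsupp : ∀ p n, ∀ j ∈ h.suppE (f p n), OSbnd spp pk p n < j :=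
        fun p n => (hfM p n).2.2
      have hfnorm : ∀ p n, ‖f p n‖ = 1 := fun p n => hB _ (hfB p n)
      have hsib : ∀ (p : List Z) (m n : ℕ), m < n →
          ∀ i ∈ h.suppE (f p m), ∀ j ∈ h.suppE (f p n), i < j := by
        intro p m n hmn i hi j hj
        have h1 : i ≤ (spp (f p m)).sup id := by
          refine Finset.le_sup (f := id) ?_
          show i ∈ spp (f p m)
          simp only [hsppdef]
          split_ifs with hv
          · exact hv.mem_toFinset.2 hi
          · exact absurd (hffin p m) hv
        have h2 : (spp (f p m)).sup id < OSbnd spp pk p (m+1) := OSbnd_sup_lt spp pk p m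
        have h3 : OSbnd spp pk p (m+1) ≤ OSbnd spp pk p n :=
          (OSbnd_strictMono spp pk p).monotone (Nat.succ_le_of_lt hmn)
        have h4 : OSbnd spp pk p n < j := hfsupp p n j hj
        omega
      have hTree : IsBlockTree h (OStree f) := by
        refine ⟨fun l hc hne => ?_, fun l m n hc hmn => ?_⟩
        · obtain ⟨L, bb, rfl⟩ := (List.eq_nil_or_concat l).resolve_left hne
          rw [List.concat_eq_append, OStree_snoc]
          exact ⟨norm_ne_zero_iff.1 (by rw [hfnorm]; exact one_ne_zero), hffin _ _⟩
        · rw [OStree_snoc, OStree_snoc]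
          exact hsib (OSpath f l) m n hmn
      have hSph : TreeInSphere (OStree f) := by
        intro l hc hne
        obtain ⟨L, bb, rfl⟩ := (List.eq_nil_or_concat l).resolve_left hne
        rw [List.concat_eq_append, OStree_snoc]
        exact hfnorm _ _
      have hBr : ∀ ψ : ℕ → ℕ, StrictMono ψ → ∀ i, branchOf (OStree f) ψ i ∈ B i := by
        intro ψ hψ i
        have hh : branchOf (OStree f) ψ i = f (OSpath f ((List.range i).map ψ)) (ψ i) :=
          OStree_range_succ f ψ i
        rw [hh]
        have := hfB (OSpath f ((List.range i).map ψ)) (ψ i)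
        rwa [OSpath_length, List.length_map, List.length_range] at this
      obtain ⟨φ, hφ, hmem⟩ := hWI ε' hε' (OStree f) hTree hSph hBr
      obtain ⟨k, hk⟩ := OS_eventually_bad (M := Mov) (A' := A') (f := f)
        (fun p n hp hv => hpkE p (OSbnd spp pk p n) hp hv) hEsc φ
      apply hk
      obtain ⟨y, hyA', hagree⟩ := hmem k
      refine ⟨y, hyA', fun i hi => ?_⟩
      rw [OSpath_length, List.length_map, List.length_range] at hi
      rw [OSpath_getD f φ k i hi]
      exact hagree i hi
    · -- Player I wins everywhere: construct the blocking via nets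
      have hrespex : ∀ p : List Z, ∃ n : ℕ, p ∉ OSEsc Mov A' →
          ∀ v : Z, Mov p.length n v → p ++ [v] ∉ OSEsc Mov A' := by
        intro p
        by_cases hp : p ∈ OSEsc Mov A'
        · exact ⟨0, fun hpn => absurd hp hpn⟩
        · obtain ⟨n, hn⟩ := OSesc_step_not hp
          exact ⟨n, fun _ => hn⟩
      choose resp hresp using hrespex
      have hnetex : ∀ i a b : ℕ, ∃ t : Finset Z,
          ↑t ⊆ {v : Z | v ∈ B i ∧ h.FinSupp v ∧ h.suppE v ⊆ Set.Ico a b} ∧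
          ∀ v ∈ {v : Z | v ∈ B i ∧ h.FinSupp v ∧ h.suppE v ⊆ Set.Ico a b},
            ∃ u ∈ t, dist v u < ε i / 2 := by
        intro i a b
        exact h.exists_net _ b (fun v hv => hB i hv.1)
          (fun v hv j hj => (hv.2.2 hj).2) (half_pos (hε i).1)
      choose Net hNet1 hNet2 using hnetex
      set Ufin : (ℕ → ℕ) → ℕ → ℕ → Finset Z := fun Mf m t =>
        (Finset.range (m+1) ×ˢ Finset.range (m+1)).biUnion
          (fun ab => Net t (Mf ab.1) (Mf ab.2)) with hUfindef
      set step : (ℕ → ℕ) → ℕ → ℕ := fun Mf m =>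
        ((Finset.range (m+1)).biUnion (fun j => OSLs (Ufin Mf m) j)).sup resp + 1
        with hstepdef
      have hstepval : ∀ Mf m, step Mf m =
          ((Finset.range (m+1)).biUnion (fun j => OSLs (Ufin Mf m) j)).sup resp + 1 :=
        fun _ _ => rfl
      refine ⟨OSN step, ⟨OSN_zero step, OSN_strictMono step⟩, ?_⟩
      rintro z ⟨hz1, a, b, ha0, hab, hskip, hsupp⟩ hzB
      have haS : StrictMono a := strictMono_nat_of_lt_succ fun t => by
        have := hskip t; have := hab t; omega
      have hage : ∀ t, 2 * t + 1 ≤ a t := by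
        intro t
        induction t with
        | zero => omega
        | succ s ih => have := hskip s; have := hab s; omega
      have hwex : ∀ t, ∃ u, u ∈ Net t (OSN step (a t)) (OSN step (b t + 1)) ∧
          dist (z t) u < ε t / 2 :=
        fun t => hNet2 t _ _ (z t) ⟨hzB t, (hz1 t).2, hsupp t⟩
      choose w hw1 hw2 using hwex
      have hwS : ∀ t, w t ∈ B t ∧ h.FinSupp (w t) ∧
          h.suppE (w t) ⊆ Set.Ico (OSN step (a t)) (OSN step (b t + 1)) :=
        fun t => hNet1 t _ _ (hw1 t)
      have key : ∀ k, ((List.range k).map w) ∉ OSEsc Mov A' := by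
        intro k
        induction k with
        | zero => simpa using hEsc
        | succ k ih =>
          have hak1 : 2 * k + 1 ≤ a k := hage k
          have hmem : ∀ j, j ≤ k →
              ((List.range j).map w) ∈ OSLs (Ufin (OSH step (a k - 1)) (a k - 1)) j := by
            intro j
            induction j with
            | zero => intro _; simp [OSLs]
            | succ j ihj =>
              intro hj
              rw [List.range_succ, List.map_append, List.map_cons, List.map_nil]
              refine OSLs_mem (ihj (by omega)) ?_
              simp only [hUfindef]
              rw [Finset.mem_biUnion]
              have hja : a j < a k := haS (by omega)
              have hjb : b j + 1 ≤ a k - 1 := by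
                have h1 : b j + 1 < a (j+1) := hskip j
                have h2 : a (j+1) ≤ a k := haS.monotone (by omega)
                omega
              refine ⟨(a j, b j + 1), ?_, ?_⟩
              · rw [Finset.mem_product]
                constructor <;> rw [Finset.mem_range] <;> omega
              · have e1 : OSH step (a k - 1) (a j) = OSN step (a j) :=
                  OSH_agree step _ _ (by omega)
                have e2 : OSH step (a k - 1) (b j + 1) = OSN step (b j + 1) :=
                  OSH_agree step _ _ (by omega)
                show w j ∈ Net j (OSH step (a k - 1) (a j)) (OSH step (a k - 1) (b j + 1))
                rw [e1, e2]
                exact hw1 j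
          have hrlt : resp ((List.range k).map w) < OSN step (a k) := by
            have hmem2 : ((List.range k).map w) ∈
                (Finset.range ((a k - 1) + 1)).biUnion
                  (fun j => OSLs (Ufin (OSH step (a k - 1)) (a k - 1)) j) := by
              rw [Finset.mem_biUnion]
              exact ⟨k, Finset.mem_range.2 (by omega), hmem k le_rfl⟩
            have hle := Finset.le_sup (f := resp) hmem2
            have hs2 := hstepval (OSH step (a k - 1)) (a k - 1)
            have hs3 : step (OSH step (a k - 1)) (a k - 1) ≤ OSN step ((a k - 1) + 1) :=
              OSN_step_le step _
            have hak : (a k - 1) + 1 = a k := by omega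
            rw [hak] at hs3
            omega
          rw [List.range_succ, List.map_append, List.map_cons, List.map_nil]
          refine hresp _ ih (w k) ?_
          simp only [hMovdef, List.length_map, List.length_range]
          refine ⟨(hwS k).1, (hwS k).2.1, fun j hj => ?_⟩
          have h5 : OSN step (a k) ≤ j := ((hwS k).2.2 hj).1
          omega
      intro n
      obtain ⟨y, hyA', hagree⟩ := OSviable_of_not_esc (key n)
      obtain ⟨hy1, u, huA, hu⟩ := hyA'
      have hyw : ∀ i, i < n → y i = w i := by
        intro i hi
        have hlen : ((List.range n).map w).length = n := by simp
        have := hagree i (by rw [hlen]; exact hi)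
        rw [this, List.getD_eq_getElem _ _ (by simp [hi])]
        simp
      refine ⟨fun i => if i < n then z i else y i,
        ⟨fun i => ?_, u, huA, fun i => ?_⟩, fun i hi => if_pos hi⟩
      · by_cases hi : i < n
        · simp only [if_pos hi]; exact hB i (hzB i)
        · simp only [if_neg hi]; exact hy1 i
      · by_cases hi : i < n
        · simp only [if_pos hi]
          have htri := dist_triangle (z i) (w i) (u i)
          rw [dist_eq_norm, dist_eq_norm, dist_eq_norm] at htri
          have hzw := hw2 i
          rw [dist_eq_norm] at hzw
          have hwu : ‖w i - u i‖ ≤ ε i / 2 := by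
            rw [← hyw i hi]
            have := hu i
            rwa [hε'app] at this
          linarith
        · simp only [if_neg hi]
          have := hu i
          rw [hε'app] at this
          linarith [(hε i).1]

end OS

end
end

section
/- Let X be a Banach space with separable dual and let q > 1. If X satisfies (∞,q)-tree estimates, then X* satisfies (q',1)-w*-tree estimates, where 1/q + 1/q' = 1. Quantitatively: if X satisfies K-(∞,q)-tree estimates then every w*-null tree in S_{X*} admits a branch (x_i*) with ‖Σ a_i x_i*‖ ≥ (4K)^{-1}(Σ|a_i|^{q'})^{1/q'} for all finitely supported scalars (a_i). -/
/-! Common definitions for formalizing results of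
E. Odell and Th. Schlumprecht,
"Embedding into Banach spaces with finite dimensional decompositions". -/

open Filter Topology
open scoped ENNReal NNReal

noncomputable section

namespace OS

namespace OSaux

variable {X : Type*} [NormedAddCommGroup X] [NormedSpace ℝ X]

lemma chain_snoc {L : List ℕ} {m : ℕ} (hL : L.Chain' (· < ·)) (hm : ∀ a ∈ L, a < m) :
    (L ++ [m]).Chain' (· < ·) := by
  rw [List.Chain', List.isChain_append]
  refine ⟨hL, List.isChain_singleton _, ?_⟩
  intro x hx y hy
  simp only [List.head?_cons, Option.mem_def, Option.some.injEq] at hy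
  subst hy
  exact hm x (List.mem_of_mem_getLast? hx)

lemma norming (f : X →L[ℝ] ℝ) (hf : ‖f‖ = 1) : ∃ u : X, ‖u‖ = 1 ∧ 9/10 ≤ f u := by
  obtain ⟨x, hx1, hx2⟩ := f.exists_lt_apply_of_lt_opNorm (r := 9/10) (by rw [hf]; norm_num)
  have hfx : f x ≠ 0 := by
    intro h; rw [h] at hx2; norm_num at hx2
  have hx0 : x ≠ 0 := by rintro rfl; simp at hfx
  have hnx : (0:ℝ) < ‖x‖ := norm_pos_iff.mpr hx0
  refine ⟨(‖x‖⁻¹ * ((f x)⁻¹ * |f x|)) • x, ?_, ?_⟩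
  · rw [norm_smul]
    have : abs ((f x)⁻¹ * |f x|) = 1 := by
      rw [abs_mul, abs_inv, abs_abs, inv_mul_cancel₀ (abs_ne_zero.mpr hfx)]
    rw [Real.norm_eq_abs, abs_mul, this, mul_one, abs_inv, abs_norm,
      inv_mul_cancel₀ hnx.ne']
  · rw [map_smul, smul_eq_mul]
    have h1 : ‖x‖⁻¹ * ((f x)⁻¹ * |f x|) * f x = ‖x‖⁻¹ * |f x| := by
      field_simp
    rw [h1]
    have h2 : |f x| ≤ ‖x‖⁻¹ * |f x| := by
      nth_rewrite 1 [← one_mul (|f x|)]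
      apply mul_le_mul_of_nonneg_right _ (abs_nonneg _)
      rw [le_inv_comm₀ one_pos hnx]
      simpa using hx1.le
    have := hx2.le.trans h2
    simpa [Real.norm_eq_abs] using this

lemma sum_half_le (s : Finset ℕ) : ∑ i ∈ s, ((2:ℝ)⁻¹) ^ (i+1) ≤ 1 := by
  classical
  obtain ⟨N, hN⟩ : ∃ N, ∀ i ∈ s, i < N := ⟨s.sup id + 1, fun i hi =>
    Nat.lt_succ_of_le (Finset.le_sup (f := id) hi)⟩
  calc ∑ i ∈ s, ((2:ℝ)⁻¹) ^ (i+1)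
      ≤ ∑ i ∈ Finset.range N, ((2:ℝ)⁻¹) ^ (i+1) := by
        apply Finset.sum_le_sum_of_subset_of_nonneg
        · intro i hi; exact Finset.mem_range.mpr (hN i hi)
        · intros; positivity
    _ = 2⁻¹ * ∑ i ∈ Finset.range N, ((2:ℝ)⁻¹) ^ i := by
        rw [Finset.mul_sum]; exact Finset.sum_congr rfl fun i _ => by ring
    _ ≤ 2⁻¹ * 2 := by
        apply mul_le_mul_of_nonneg_left _ (by norm_num)
        simpa [one_div] using sum_geometric_two_le N
    _ = 1 := by norm_num

lemma weakCauchy (hsep : TopologicalSpace.SeparableSpace (StrongDual ℝ X))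
    (u : ℕ → X) (hu : ∀ n, ‖u n‖ ≤ 1) :
    ∃ (σ : ℕ → ℕ) (Lim : (X →L[ℝ] ℝ) → ℝ), StrictMono σ ∧
      ∀ f : X →L[ℝ] ℝ, Tendsto (fun t => f (u (σ t))) atTop (𝓝 (Lim f)) := by
  classical
  haveI : Nonempty (StrongDual ℝ X) := ⟨0⟩
  set D : ℕ → StrongDual ℝ X := TopologicalSpace.denseSeq _ with hD
  have hdense : DenseRange D := TopologicalSpace.denseRange_denseSeq _
  set T : Set (ℕ → ℝ) := Set.univ.pi (fun k => Set.Icc (-‖D k‖) ‖D k‖) with hT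
  have hcomp : IsCompact T := isCompact_univ_pi fun k => isCompact_Icc
  set F : ℕ → (ℕ → ℝ) := fun n k => D k (u n) with hF
  have hmem : ∀ n, F n ∈ T := by
    intro n
    rw [hT, Set.mem_univ_pi]
    intro k
    have : |D k (u n)| ≤ ‖D k‖ := by
      calc |D k (u n)| = ‖D k (u n)‖ := rfl
        _ ≤ ‖D k‖ * ‖u n‖ := (D k).le_opNorm _
        _ ≤ ‖D k‖ * 1 := by
            exact mul_le_mul_of_nonneg_left (hu n) (norm_nonneg _)
        _ = ‖D k‖ := mul_one _
    exact abs_le.mp this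
  obtain ⟨g, -, σ, hσ, hconv⟩ := hcomp.isSeqCompact hmem
  have hk : ∀ k, Tendsto (fun t => D k (u (σ t))) atTop (𝓝 (g k)) :=
    fun k => tendsto_pi_nhds.mp hconv k
  have hC : ∀ f : X →L[ℝ] ℝ, CauchySeq (fun t => f (u (σ t))) := by
    intro f
    rw [Metric.cauchySeq_iff]
    intro ε hε
    obtain ⟨k, hkf⟩ := Metric.denseRange_iff.mp hdense f (ε/3) (by positivity)
    have hcau := (hk k).cauchySeq
    rw [Metric.cauchySeq_iff] at hcau
    obtain ⟨N, hN⟩ := hcau (ε/3) (by positivity)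
    refine ⟨N, fun s hs t ht => ?_⟩
    have hfd : ∀ n, |f (u n) - D k (u n)| ≤ dist f (D k) := by
      intro n
      have : |(f - D k) (u n)| ≤ ‖f - D k‖ * ‖u n‖ := (f - D k).le_opNorm _
      have h2 : ‖f - D k‖ * ‖u n‖ ≤ ‖f - D k‖ :=
        (mul_le_mul_of_nonneg_left (hu n) (norm_nonneg _)).trans (by rw [mul_one])
      simpa [dist_eq_norm, ContinuousLinearMap.sub_apply] using this.trans h2
    have h1 := hfd (σ s)
    have h2 := hfd (σ t)
    have h3 := hN s hs t ht
    rw [Real.dist_eq] at h3 ⊢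
    have : f (u (σ s)) - f (u (σ t)) =
        (f (u (σ s)) - D k (u (σ s))) + (D k (u (σ s)) - D k (u (σ t)))
          + (D k (u (σ t)) - f (u (σ t))) := by ring
    rw [this]
    calc |_| ≤ |f (u (σ s)) - D k (u (σ s))| + |D k (u (σ s)) - D k (u (σ t))|
        + |D k (u (σ t)) - f (u (σ t))| := by
          exact (abs_add_le _ _).trans (by gcongr; exact abs_add_le _ _)
      _ < ε := by
          have h2' : |D k (u (σ t)) - f (u (σ t))| ≤ dist f (D k) := by
            rw [abs_sub_comm]; exact h2
          have := hkf
          linarith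
  have hL : ∀ f : X →L[ℝ] ℝ, ∃ L, Tendsto (fun t => f (u (σ t))) atTop (𝓝 L) :=
    fun f => cauchySeq_tendsto_of_complete (hC f)
  choose Lim hLim using hL
  exact ⟨σ, Lim, hσ, hLim⟩


lemma foldr_max_le : ∀ (L : List ℕ), ∀ a ∈ L, a ≤ L.foldr max 0 := by
  intro L
  induction L with
  | nil => intro a ha; cases ha
  | cons b t ih =>
    intro a ha
    rcases List.mem_cons.mp ha with rfl | ha'
    · exact le_max_left _ _
    · exact le_trans (ih a ha') (le_max_right _ _)

lemma node (hsep : TopologicalSpace.SeparableSpace (StrongDual ℝ X))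
    (xs : List ℕ → (X →L[ℝ] ℝ))
    (hsph : ∀ l : List ℕ, l.Chain' (· < ·) → l ≠ [] → ‖xs l‖ = 1)
    (hwnull : ∀ l : List ℕ, l.Chain' (· < ·) → ∀ v : X,
      Tendsto (fun n => xs (l ++ [n]) v) atTop (𝓝 0))
    (L : List ℕ) (fs : List (X →L[ℝ] ℝ)) (vs : List X) (η : ℝ) :
    ∃ (κ : ℕ → ℕ) (w : ℕ → X), (L.Chain' (· < ·) ∧ 0 < η) →
      (∀ n, ∀ m ∈ L, m < κ n) ∧
      (∀ n, ‖w n‖ = 1) ∧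
      (∀ n, 2/5 ≤ xs (L ++ [κ n]) (w n)) ∧
      (∀ n, ∀ f ∈ fs, |f (w n)| ≤ η) ∧
      (∀ n, ∀ v ∈ vs, |xs (L ++ [κ n]) v| ≤ η) ∧
      (∀ f : X →L[ℝ] ℝ, Tendsto (fun n => f (w n)) atTop (𝓝 0)) := by
  classical
  by_cases hgood : L.Chain' (· < ·) ∧ 0 < η
  swap
  · exact ⟨fun _ => 0, fun _ => 0, fun h => absurd h hgood⟩
  obtain ⟨hchain, hη⟩ := hgood
  set N0 : ℕ := L.foldr max 0 + 1 with hN0def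
  have hfold : ∀ a ∈ L, a ≤ L.foldr max 0 := foldr_max_le L
  have hN0 : ∀ a ∈ L, a < N0 := fun a ha => Nat.lt_succ_of_le (hfold a ha)
  have hchainm : ∀ m, N0 ≤ m → (L ++ [m]).Chain' (· < ·) :=
    fun m hm => chain_snoc hchain (fun a ha => lt_of_lt_of_le (hN0 a ha) hm)
  have hnorm1 : ∀ m, N0 ≤ m → ‖xs (L ++ [m])‖ = 1 :=
    fun m hm => hsph _ (hchainm m hm) (by simp)
  choose u hu1 hu2 using fun t : ℕ =>
    norming (xs (L ++ [N0 + t])) (hnorm1 _ (Nat.le_add_right _ _))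
  obtain ⟨σ, Lim, hσ, hLim⟩ := weakCauchy hsep u (fun t => (hu1 t).le)
  -- uniform Cauchy threshold for the finitely many functionals in fs
  have hev1 : ∀ f : X →L[ℝ] ℝ, ∀ᶠ t in atTop, |f (u (σ t)) - Lim f| ≤ η/4 := by
    intro f
    obtain ⟨N, hN⟩ := Metric.tendsto_atTop.mp (hLim f) (η/4) (by positivity)
    exact eventually_atTop.mpr ⟨N, fun t ht => by
      have := hN t ht; rw [Real.dist_eq] at this; exact this.le⟩
  have hev : ∀ᶠ t in atTop, ∀ f ∈ fs, |f (u (σ t)) - Lim f| ≤ η/4 := by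
    induction fs with
    | nil => simp
    | cons f tl ih =>
      filter_upwards [hev1 f, ih] with t h1 h2
      intro g hg
      rcases List.mem_cons.mp hg with rfl | hg'
      · exact h1
      · exact h2 g hg'
  obtain ⟨T, hT⟩ := eventually_atTop.mp hev
  -- tendsto of the shifted index map
  have hidx : Tendsto (fun t => N0 + σ t) atTop atTop :=
    tendsto_atTop_mono (fun t => Nat.le_add_left _ _) hσ.tendsto_atTop
  have hnodev : ∀ v : X, Tendsto (fun t => xs (L ++ [N0 + σ t]) v) atTop (𝓝 0) :=
    fun v => (hwnull L hchain v).comp hidx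
  have hevv : ∀ (c : ℝ), 0 < c → ∀ vss : List X,
      ∀ᶠ t in atTop, ∀ v ∈ vss, |xs (L ++ [N0 + σ t]) v| ≤ c := by
    intro c hc vss
    induction vss with
    | nil => simp
    | cons v tl ih =>
      have h1 : ∀ᶠ t in atTop, |xs (L ++ [N0 + σ t]) v| ≤ c := by
        have := Metric.tendsto_atTop.mp (hnodev v) c hc
        obtain ⟨N, hN⟩ := this
        exact eventually_atTop.mpr ⟨N, fun t ht => by
          have := hN t ht; rw [Real.dist_eq, sub_zero] at this; exact this.le⟩
      filter_upwards [h1, ih] with t h1 h2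
      intro w hw
      rcases List.mem_cons.mp hw with rfl | hw'
      · exact h1
      · exact h2 w hw'
  have hkn : ∀ n : ℕ, ∃ t, T + n ≤ t ∧
      |xs (L ++ [N0 + σ t]) (u (σ (T + n)))| ≤ 1/10 ∧
      ∀ v ∈ vs, |xs (L ++ [N0 + σ t]) v| ≤ η := by
    intro n
    have e1 := hevv (1/10) (by norm_num) [u (σ (T + n))]
    have e2 := hevv η hη vs
    have e3 : ∀ᶠ t in atTop, T + n ≤ t := eventually_ge_atTop _
    obtain ⟨t, h3, h1, h2⟩ := (e3.and ((e1.and e2))).exists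
    exact ⟨t, h3, h1 _ (List.mem_singleton_self _), h2⟩
  choose tk htk1 htk2 htk3 using hkn
  set κ : ℕ → ℕ := fun n => N0 + σ (tk n) with hκdef
  set d : ℕ → X := fun n => u (σ (tk n)) - u (σ (T + n)) with hddef
  set w : ℕ → X := fun n => ‖d n‖⁻¹ • d n with hwdef
  have hd1 : ∀ n, 4/5 ≤ xs (L ++ [κ n]) (d n) := by
    intro n
    have h9 := hu2 (σ (tk n))
    have h10 := htk2 n
    have habs := (abs_le.mp h10).1
    have : xs (L ++ [κ n]) (d n)
        = xs (L ++ [N0 + σ (tk n)]) (u (σ (tk n))) - xs (L ++ [κ n]) (u (σ (T + n))) := by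
      rw [hddef]; simp [hκdef, map_sub]
    rw [this]
    have : xs (L ++ [κ n]) (u (σ (T + n))) = xs (L ++ [N0 + σ (tk n)]) (u (σ (T + n))) := rfl
    linarith [ (abs_le.mp h10).2 ]
  have hκge : ∀ n, N0 ≤ κ n := fun n => Nat.le_add_right _ _
  have hdge : ∀ n, 4/5 ≤ ‖d n‖ := by
    intro n
    have h1 := hd1 n
    have h2 : xs (L ++ [κ n]) (d n) ≤ ‖d n‖ := by
      have := (xs (L ++ [κ n])).le_opNorm (d n)
      rw [hnorm1 _ (hκge n), one_mul] at this
      exact le_trans (le_abs_self _) this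
    linarith
  have hdle : ∀ n, ‖d n‖ ≤ 2 := by
    intro n
    have := norm_sub_le (u (σ (tk n))) (u (σ (T + n)))
    rw [hu1, hu1] at this
    have h2 : (1:ℝ) + 1 ≤ 2 := by norm_num
    simpa [hddef] using this.trans h2
  have hdne : ∀ n, d n ≠ 0 := by
    intro n h
    have := hdge n
    rw [h, norm_zero] at this
    norm_num at this
  have hinvge : ∀ n, (2:ℝ)⁻¹ ≤ ‖d n‖⁻¹ := by
    intro n
    exact inv_anti₀ (lt_of_lt_of_le (by norm_num) (hdge n)) (hdle n)
  have hinvle : ∀ n, ‖d n‖⁻¹ ≤ 5/4 := by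
    intro n
    rw [inv_le_comm₀ (norm_pos_iff.mpr (hdne n)) (by norm_num)]
    linarith [hdge n]
  have hinvnn : ∀ n, (0:ℝ) ≤ ‖d n‖⁻¹ := fun n => by positivity
  refine ⟨κ, w, fun _ => ⟨?_, ?_, ?_, ?_, ?_, ?_⟩⟩
  · intro n m hm
    exact lt_of_lt_of_le (hN0 m hm) (hκge n)
  · intro n
    rw [hwdef]
    simp only [norm_smul, norm_inv, norm_norm]
    rw [inv_mul_cancel₀ (norm_ne_zero_iff.mpr (hdne n))]
  · intro n
    rw [hwdef]
    simp only [map_smul, smul_eq_mul]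
    calc (2:ℝ)/5 = 2⁻¹ * (4/5) := by norm_num
      _ ≤ ‖d n‖⁻¹ * xs (L ++ [κ n]) (d n) :=
          mul_le_mul (hinvge n) (hd1 n) (by norm_num) (hinvnn n)
  · intro n f hf
    have h1 := hT (tk n) (le_trans (Nat.le_add_right _ _) (htk1 n)) f hf
    have h2 := hT (T + n) (Nat.le_add_right _ _) f hf
    have hfd : |f (d n)| ≤ η/2 := by
      have : f (d n) = (f (u (σ (tk n))) - Lim f) - (f (u (σ (T + n))) - Lim f) := by
        rw [hddef]; simp only [map_sub]; ring
      rw [this]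
      calc |_| ≤ |f (u (σ (tk n))) - Lim f| + |f (u (σ (T + n))) - Lim f| := abs_sub _ _
        _ ≤ η/4 + η/4 := add_le_add h1 h2
        _ = η/2 := by ring
    have : |f (w n)| = ‖d n‖⁻¹ * |f (d n)| := by
      rw [hwdef]; simp [abs_mul, abs_of_nonneg (hinvnn n)]
    rw [this]
    calc ‖d n‖⁻¹ * |f (d n)| ≤ (5/4) * (η/2) :=
        mul_le_mul (hinvle n) hfd (abs_nonneg _) (by norm_num)
      _ ≤ η := by linarith
  · intro n v hv
    exact htk3 n v hv
  · intro f
    have ht1 : Tendsto (fun n => f (u (σ (tk n)))) atTop (𝓝 (Lim f)) :=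
      (hLim f).comp (tendsto_atTop_mono (fun n => (htk1 n).trans' (Nat.le_add_left _ _)) tendsto_id)
    have ht2 : Tendsto (fun n => f (u (σ (T + n)))) atTop (𝓝 (Lim f)) :=
      (hLim f).comp (tendsto_atTop_mono (fun n => Nat.le_add_left n T) tendsto_id)
    have hd0 : Tendsto (fun n => f (d n)) atTop (𝓝 0) := by
      have := ht1.sub ht2
      rw [sub_self] at this
      simpa [hddef, map_sub] using this
    apply squeeze_zero_norm (a := fun n => (5/4) * ‖f (d n)‖)
    · intro n
      have : ‖f (w n)‖ = ‖d n‖⁻¹ * ‖f (d n)‖ := by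
        rw [hwdef]; simp [norm_smul, abs_of_nonneg (hinvnn n)]
      rw [this]
      exact mul_le_mul_of_nonneg_right (hinvle n) (norm_nonneg _)
    · simpa using (hd0.norm.const_mul (5/4 : ℝ))


noncomputable def eta (h : ℕ) : ℝ := (1/100) * ((4:ℝ)⁻¹) ^ h

lemma eta_pos (h : ℕ) : 0 < eta h := by unfold eta; positivity

/-- the recursive construction: the input list is the *reversed* position in the tree;
the first output is the reversed list of indices chosen so far, the second output is
the list of constructed vectors (most recent first). -/
noncomputable def go (xs : List ℕ → (X →L[ℝ] ℝ))
    (κf : List ℕ → List (X →L[ℝ] ℝ) → List X → ℝ → ℕ → ℕ)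
    (wf : List ℕ → List (X →L[ℝ] ℝ) → List X → ℝ → ℕ → X) : List ℕ → List ℕ × List X
  | [] => ([], [])
  | n :: r =>
    let st := go xs κf wf r
    let fsl := (List.range st.1.length).map fun i => xs (st.1.reverse.take (i+1))
    (κf st.1.reverse fsl st.2 (eta (st.2.length + 1)) n :: st.1,
     wf st.1.reverse fsl st.2 (eta (st.2.length + 1)) n :: st.2)

lemma go_nil (xs : List ℕ → (X →L[ℝ] ℝ)) (κf wf') : go xs κf wf' [] = ([], []) := by
  simp [go]

lemma go_cons (xs : List ℕ → (X →L[ℝ] ℝ)) (κf wf') (n : ℕ) (r : List ℕ) :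
    go xs κf wf' (n :: r) =
      (κf (go xs κf wf' r).1.reverse
          ((List.range (go xs κf wf' r).1.length).map fun i =>
            xs ((go xs κf wf' r).1.reverse.take (i+1)))
          (go xs κf wf' r).2 (eta ((go xs κf wf' r).2.length + 1)) n :: (go xs κf wf' r).1,
       wf' (go xs κf wf' r).1.reverse
          ((List.range (go xs κf wf' r).1.length).map fun i =>
            xs ((go xs κf wf' r).1.reverse.take (i+1)))
          (go xs κf wf' r).2 (eta ((go xs κf wf' r).2.length + 1)) n :: (go xs κf wf' r).2) := by
  simp [go]

lemma prefix_snoc {p l : List ℕ} {n : ℕ} (h : p <+: l ++ [n]) : p = l ++ [n] ∨ p <+: l := by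
  obtain ⟨t, ht⟩ := h
  rcases List.eq_nil_or_concat t with rfl | ⟨t', a, rfl⟩
  · left; simpa using ht
  · right
    rw [List.concat_eq_append, ← List.append_assoc] at ht
    exact ⟨t', List.append_inj_left' ht rfl⟩


variable [Inhabited X]

lemma invariants (xs : List ℕ → (X →L[ℝ] ℝ))
    (κf : List ℕ → List (X →L[ℝ] ℝ) → List X → ℝ → ℕ → ℕ)
    (wf' : List ℕ → List (X →L[ℝ] ℝ) → List X → ℝ → ℕ → X)
    (hnode : ∀ (L : List ℕ) (fsl : List (X →L[ℝ] ℝ)) (vs : List X) (η : ℝ),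
      (L.Chain' (· < ·) ∧ 0 < η) →
      (∀ n, ∀ m ∈ L, m < κf L fsl vs η n) ∧
      (∀ n, ‖wf' L fsl vs η n‖ = 1) ∧
      (∀ n, 2/5 ≤ xs (L ++ [κf L fsl vs η n]) (wf' L fsl vs η n)) ∧
      (∀ n, ∀ f ∈ fsl, |f (wf' L fsl vs η n)| ≤ η) ∧
      (∀ n, ∀ v ∈ vs, |xs (L ++ [κf L fsl vs η n]) v| ≤ η)) :
    ∀ l : List ℕ, l.Chain' (· < ·) →
      ((go xs κf wf' l.reverse).1.length = l.length) ∧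
      ((go xs κf wf' l.reverse).2.length = l.length) ∧
      ((go xs κf wf' l.reverse).1.reverse.Chain' (· < ·)) ∧
      (∀ p, p <+: l → (go xs κf wf' p.reverse).1.reverse
          = (go xs κf wf' l.reverse).1.reverse.take p.length) ∧
      (∀ p, p <+: l → p ≠ [] →
          (go xs κf wf' p.reverse).2.headI ∈ (go xs κf wf' l.reverse).2) ∧
      (l ≠ [] → ‖(go xs κf wf' l.reverse).2.headI‖ = 1) ∧
      (l ≠ [] → 2/5 ≤ xs ((go xs κf wf' l.reverse).1.reverse)
          ((go xs κf wf' l.reverse).2.headI)) ∧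
      (∀ p, p <+: l → p ≠ [] → p ≠ l →
        |xs ((go xs κf wf' p.reverse).1.reverse) ((go xs κf wf' l.reverse).2.headI)|
            ≤ eta l.length ∧
        |xs ((go xs κf wf' l.reverse).1.reverse) ((go xs κf wf' p.reverse).2.headI)|
            ≤ eta l.length) := by
  intro l
  induction l using List.reverseRecOn with
  | nil =>
    intro _
    refine ⟨by simp [go_nil], by simp [go_nil], by simp [go_nil]; exact List.isChain_nil, ?_, ?_, ?_, ?_, ?_⟩
    · intro p hp
      rw [List.prefix_nil.mp hp]
      simp [go_nil]
    · intro p hp hpne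
      exact absurd (List.prefix_nil.mp hp) hpne
    · intro h; exact absurd rfl h
    · intro h; exact absurd rfl h
    · intro p hp hpne
      exact absurd (List.prefix_nil.mp hp) hpne
  | append_singleton l0 n ih =>
    intro hch
    have hl0ch : l0.Chain' (· < ·) := hch.prefix ⟨[n], rfl⟩
    obtain ⟨ih1, ih2, ih3, ih4, ih5, ih6, ih7, ih8⟩ := ih hl0ch
    set st := go xs κf wf' l0.reverse with hst
    set fsl := (List.range st.1.length).map (fun i => xs (st.1.reverse.take (i+1))) with hfsl
    set ηv := eta (st.2.length + 1) with hηv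
    have hrev : (l0 ++ [n]).reverse = n :: l0.reverse := by simp
    have hgo : go xs κf wf' (l0 ++ [n]).reverse =
        (κf st.1.reverse fsl st.2 ηv n :: st.1, wf' st.1.reverse fsl st.2 ηv n :: st.2) := by
      rw [hrev, go_cons, ← hst, ← hfsl, ← hηv]
    set κ0 := κf st.1.reverse fsl st.2 ηv with hκ0
    set w0 := wf' st.1.reverse fsl st.2 ηv with hw0
    have hn := hnode st.1.reverse fsl st.2 ηv ⟨ih3, eta_pos _⟩
    have hlen1r : st.1.reverse.length = l0.length := by rw [List.length_reverse]; exact ih1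
    have hetaeq : ηv = eta (l0 ++ [n]).length := by
      rw [hηv, ih2]; simp
    have hmemfsl : ∀ p : List ℕ, p <+: l0 → p ≠ [] →
        xs ((go xs κf wf' p.reverse).1.reverse) ∈ fsl := by
      intro p hp hpne
      have hple : p.length ≤ l0.length := by
        simpa using List.IsPrefix.length_le hp
      have hp1 : 1 ≤ p.length := List.length_pos_iff.mpr hpne
      rw [hfsl]
      refine List.mem_map.mpr ⟨p.length - 1, List.mem_range.mpr (by omega), ?_⟩
      rw [Nat.sub_add_cancel hp1, ← ih4 p hp]
    refine ⟨?_, ?_, ?_, ?_, ?_, ?_, ?_, ?_⟩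
    · rw [hgo]; simp [ih1]
    · rw [hgo]; simp [ih2]
    · rw [hgo]
      simp only [List.reverse_cons]
      exact chain_snoc ih3 (hn.1 n)
    · intro p hp
      rcases prefix_snoc hp with hpe | hp0
      · subst hpe
        have : ((go xs κf wf' (l0 ++ [n]).reverse).1.reverse).length = (l0 ++ [n]).length := by
          rw [List.length_reverse, hgo]
          simp [ih1]
        rw [List.take_of_length_le (le_of_eq this)]
      · rw [hgo]
        simp only [List.reverse_cons]
        rw [List.take_append_of_le_length (by rw [hlen1r]; simpa using hp0.length_le)]
        exact ih4 p hp0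
    · intro p hp hpne
      rcases prefix_snoc hp with hpe | hp0
      · subst hpe
        rw [hgo]
        simp
      · rw [hgo]
        exact List.mem_cons_of_mem _ (ih5 p hp0 hpne)
    · intro _
      rw [hgo]
      exact hn.2.1 n
    · intro _
      rw [hgo]
      simp only [List.reverse_cons, List.headI]
      exact hn.2.2.1 n
    · intro p hp hpne hpl
      have hp0 : p <+: l0 := by
        rcases prefix_snoc hp with rfl | hp0
        · exact absurd rfl hpl
        · exact hp0
      constructor
      · rw [hgo, hetaeq.symm]
        simp only [List.headI]
        exact hn.2.2.2.1 n _ (hmemfsl p hp0 hpne)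
      · rw [hgo, hetaeq.symm]
        simp only [List.reverse_cons]
        exact hn.2.2.2.2 n _ (ih5 p hp0 hpne)

lemma final_estimate (q q' K : ℝ) (hq : 1 < q) (hq' : 1/q + 1/q' = 1) (hK : 0 < K)
    (xst : ℕ → X →L[ℝ] ℝ) (zt : ℕ → X)
    (hpair : ∀ i, 2/5 ≤ xst i (zt i))
    (hcross : ∀ i j, i ≠ j → |xst i (zt j)| ≤ (1/100) * (((2:ℝ)⁻¹)^(i+1) * ((2:ℝ)⁻¹)^(j+1)))
    (hupper : ∀ (s : Finset ℕ) (b : ℕ → ℝ),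
      ‖∑ i ∈ s, b i • zt i‖ ≤ K * (∑ i ∈ s, |b i| ^ q) ^ (1/q))
    (s : Finset ℕ) (a : ℕ → ℝ) :
    (4*K)⁻¹ * (∑ i ∈ s, |a i| ^ q') ^ (1/q') ≤ ‖∑ i ∈ s, a i • xst i‖ := by
  classical
  have hq0 : (0:ℝ) < q := lt_trans one_pos hq
  have hinvq : 0 < 1/q := by positivity
  have hinvq1 : 1/q < 1 := by rw [div_lt_one hq0]; exact hq
  have hinvq' : 0 < 1/q' := by linarith
  have hq'0 : (0:ℝ) < q' := by
    rcases lt_trichotomy q' 0 with h | h | h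
    · exfalso; have : 1/q' < 0 := by exact div_neg_of_pos_of_neg one_pos h
      linarith
    · exfalso; rw [h] at hinvq'; simp at hinvq'
    · exact h
  have hq'1 : 1 < q' := by
    by_contra h
    push_neg at h
    have h2 : 1 ≤ 1/q' := by
      rw [le_div_iff₀ hq'0]; linarith
    linarith
  have hqq' : (q' - 1) * q = q' := by
    have h1 : q ≠ 0 := hq0.ne'
    have h2 : q' ≠ 0 := hq'0.ne'
    field_simp at hq'
    nlinarith [hq']
  set S := ∑ i ∈ s, |a i| ^ q' with hS
  have hS0 : 0 ≤ S := Finset.sum_nonneg fun i _ => Real.rpow_nonneg (abs_nonneg _) _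
  rcases eq_or_lt_of_le hS0 with hS0' | hSpos
  · -- S = 0
    rw [← hS0', Real.zero_rpow (by positivity : 1/q' ≠ 0)]
    simpa using norm_nonneg _
  -- main case
  set b : ℕ → ℝ := fun i => |a i| ^ (q' - 1) * Real.sign (a i) with hb
  have hab : ∀ i, a i * b i = |a i| ^ q' := by
    intro i
    rcases lt_trichotomy (a i) 0 with h | h | h
    · rw [hb]
      simp only [Real.sign_of_neg h]
      rw [abs_of_neg h]
      have h1 : a i * ((-a i) ^ (q' - 1) * (-1)) = (-a i) ^ (q' - 1) * (-a i) := by ring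
      rw [h1, ← Real.rpow_add_one (neg_ne_zero.mpr h.ne) (q' - 1), sub_add_cancel]
    · rw [hb, h]
      simp only [zero_mul, abs_zero]
      rw [Real.zero_rpow hq'0.ne']
    · rw [hb]
      simp only [Real.sign_of_pos h]
      rw [abs_of_pos h]
      have h1 : a i * (a i ^ (q' - 1) * 1) = a i ^ (q' - 1) * a i := by ring
      rw [h1, ← Real.rpow_add_one h.ne' (q' - 1), sub_add_cancel]
  have habsb : ∀ i, |b i| = |a i| ^ (q' - 1) := by
    intro i
    rcases lt_trichotomy (a i) 0 with h | h | h
    · rw [hb]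
      simp only [Real.sign_of_neg h, abs_mul]
      rw [abs_of_nonneg (Real.rpow_nonneg (abs_nonneg _) _)]
      norm_num
    · rw [hb]
      simp [h, Real.sign_zero, Real.zero_rpow (show q' - 1 ≠ 0 by linarith)]
    · rw [hb]
      simp only [Real.sign_of_pos h, abs_mul]
      rw [abs_of_nonneg (Real.rpow_nonneg (abs_nonneg _) _)]
      norm_num
  have hbq : ∀ i, |b i| ^ q = |a i| ^ q' := by
    intro i
    rw [habsb i, ← Real.rpow_mul (abs_nonneg _), hqq']
  set c : ℕ → ℝ := fun i => ((2:ℝ)⁻¹) ^ (i+1) with hc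
  have hcpos : ∀ i, 0 < c i := fun i => by rw [hc]; positivity
  have ha_le : ∀ i ∈ s, |a i| ≤ S ^ (1/q') := by
    intro i hi
    have h1 : |a i| ^ q' ≤ S :=
      Finset.single_le_sum (f := fun i => |a i| ^ q')
        (fun j _ => Real.rpow_nonneg (abs_nonneg _) _) hi
    have h2 : (|a i| ^ q') ^ (1/q') ≤ S ^ (1/q') :=
      Real.rpow_le_rpow (Real.rpow_nonneg (abs_nonneg _) _) h1 (le_of_lt hinvq')
    rwa [← Real.rpow_mul (abs_nonneg _), mul_one_div_cancel hq'0.ne', Real.rpow_one] at h2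
  have hb_le : ∀ j ∈ s, |b j| ≤ S ^ (1/q) := by
    intro j hj
    have h1 : |b j| ^ q ≤ S := by rw [hbq j]
                                  exact Finset.single_le_sum (f := fun i => |a i| ^ q')
                                    (fun i _ => Real.rpow_nonneg (abs_nonneg _) _) hj
    have h2 : (|b j| ^ q) ^ (1/q) ≤ S ^ (1/q) :=
      Real.rpow_le_rpow (Real.rpow_nonneg (abs_nonneg _) _) h1 (le_of_lt hinvq)
    rwa [← Real.rpow_mul (abs_nonneg _), mul_one_div_cancel hq0.ne', Real.rpow_one] at h2
  have hsum_a : ∑ i ∈ s, |a i| * c i ≤ S ^ (1/q') := by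
    calc ∑ i ∈ s, |a i| * c i ≤ ∑ i ∈ s, S ^ (1/q') * c i :=
          Finset.sum_le_sum fun i hi =>
            mul_le_mul_of_nonneg_right (ha_le i hi) (hcpos i).le
      _ = S ^ (1/q') * ∑ i ∈ s, c i := by rw [Finset.mul_sum]
      _ ≤ S ^ (1/q') * 1 :=
          mul_le_mul_of_nonneg_left (sum_half_le s) (Real.rpow_nonneg hS0 _)
      _ = S ^ (1/q') := mul_one _
  have hsum_b : ∑ j ∈ s, |b j| * c j ≤ S ^ (1/q) := by
    calc ∑ j ∈ s, |b j| * c j ≤ ∑ j ∈ s, S ^ (1/q) * c j :=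
          Finset.sum_le_sum fun j hj =>
            mul_le_mul_of_nonneg_right (hb_le j hj) (hcpos j).le
      _ = S ^ (1/q) * ∑ j ∈ s, c j := by rw [Finset.mul_sum]
      _ ≤ S ^ (1/q) * 1 :=
          mul_le_mul_of_nonneg_left (sum_half_le s) (Real.rpow_nonneg hS0 _)
      _ = S ^ (1/q) := mul_one _
  set g : ℕ → ℕ → ℝ := fun i j => a i * (b j * (xst i) (zt j)) with hg
  have happ : (∑ i ∈ s, a i • xst i) (∑ j ∈ s, b j • zt j) = ∑ i ∈ s, ∑ j ∈ s, g i j := by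
    simp only [hg, ContinuousLinearMap.sum_apply, ContinuousLinearMap.smul_apply,
      map_sum, map_smul, smul_eq_mul, Finset.mul_sum]
    rw [Finset.sum_comm]
    exact Finset.sum_congr rfl fun i _ => Finset.sum_congr rfl fun j _ => by ring
  have hsplit : ∑ i ∈ s, ∑ j ∈ s, g i j
      = ∑ i ∈ s, g i i + ∑ i ∈ s, ∑ j ∈ s.erase i, g i j := by
    rw [← Finset.sum_add_distrib]
    exact Finset.sum_congr rfl fun i hi => (Finset.add_sum_erase s (g i) hi).symm
  have hdiag : (2/5) * S ≤ ∑ i ∈ s, g i i := by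
    rw [hS, Finset.mul_sum]
    refine Finset.sum_le_sum fun i hi => ?_
    have h1 : g i i = |a i| ^ q' * (xst i) (zt i) := by
      rw [hg]
      show a i * (b i * (xst i) (zt i)) = _
      rw [show a i * (b i * (xst i) (zt i)) = (a i * b i) * (xst i) (zt i) from by ring,
        hab i]
    rw [h1]
    calc 2/5 * |a i| ^ q' = |a i| ^ q' * (2/5) := by ring
      _ ≤ |a i| ^ q' * (xst i) (zt i) :=
          mul_le_mul_of_nonneg_left (hpair i) (Real.rpow_nonneg (abs_nonneg _) _)
  have hoff : |∑ i ∈ s, ∑ j ∈ s.erase i, g i j| ≤ (1/100) * S := by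
    calc |∑ i ∈ s, ∑ j ∈ s.erase i, g i j|
        ≤ ∑ i ∈ s, |∑ j ∈ s.erase i, g i j| := Finset.abs_sum_le_sum_abs _ _
      _ ≤ ∑ i ∈ s, ∑ j ∈ s.erase i, |g i j| :=
          Finset.sum_le_sum fun i _ => Finset.abs_sum_le_sum_abs _ _
      _ ≤ ∑ i ∈ s, ∑ j ∈ s.erase i, (|a i| * c i) * ((|b j| * c j) * (1/100)) := by
          refine Finset.sum_le_sum fun i _ => Finset.sum_le_sum fun j hj => ?_
          have hij : i ≠ j := (Finset.ne_of_mem_erase hj).symm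
          have h1 : |g i j| = |a i| * (|b j| * |(xst i) (zt j)|) := by
            rw [hg]
            show |a i * (b j * (xst i) (zt j))| = _
            rw [abs_mul, abs_mul]
          rw [h1]
          calc |a i| * (|b j| * |(xst i) (zt j)|)
              ≤ |a i| * (|b j| * ((1/100) * (c i * c j))) := by
                refine mul_le_mul_of_nonneg_left
                  (mul_le_mul_of_nonneg_left (hcross i j hij) (abs_nonneg _)) (abs_nonneg _)
            _ = (|a i| * c i) * ((|b j| * c j) * (1/100)) := by ring
      _ ≤ ∑ i ∈ s, ∑ j ∈ s, (|a i| * c i) * ((|b j| * c j) * (1/100)) := by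
          refine Finset.sum_le_sum fun i _ => ?_
          refine Finset.sum_le_sum_of_subset_of_nonneg (Finset.erase_subset _ _)
            (fun j _ _ => ?_)
          have := (hcpos i).le
          have := (hcpos j).le
          positivity
      _ = (∑ i ∈ s, |a i| * c i) * (∑ j ∈ s, (|b j| * c j) * (1/100)) := by
          rw [Finset.sum_mul_sum]
      _ = (∑ i ∈ s, |a i| * c i) * ((∑ j ∈ s, |b j| * c j) * (1/100)) := by
          rw [← Finset.sum_mul]
      _ ≤ S ^ (1/q') * (S ^ (1/q) * (1/100)) := by
          refine mul_le_mul hsum_a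
            (mul_le_mul_of_nonneg_right hsum_b (by norm_num))
            (by positivity) (Real.rpow_nonneg hS0 _)
      _ = (1/100) * (S ^ (1/q') * S ^ (1/q)) := by ring
      _ = (1/100) * S := by
          rw [← Real.rpow_add hSpos, show 1/q' + 1/q = 1 from by linarith, Real.rpow_one]
  have hlow : (1/4) * S ≤ (∑ i ∈ s, a i • xst i) (∑ j ∈ s, b j • zt j) := by
    rw [happ, hsplit]
    have h2 := neg_abs_le (∑ i ∈ s, ∑ j ∈ s.erase i, g i j)
    linarith
  have hvec : ‖∑ j ∈ s, b j • zt j‖ ≤ K * S ^ (1/q) := by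
    have h1 := hupper s b
    have heq : ∑ i ∈ s, |b i| ^ q = S := by
      rw [hS]; exact Finset.sum_congr rfl fun i _ => hbq i
    rwa [heq] at h1
  have hFv : (1/4) * S ≤ ‖∑ i ∈ s, a i • xst i‖ * (K * S ^ (1/q)) := by
    have h1 : (∑ i ∈ s, a i • xst i) (∑ j ∈ s, b j • zt j)
        ≤ ‖∑ i ∈ s, a i • xst i‖ * ‖∑ j ∈ s, b j • zt j‖ := by
      calc (∑ i ∈ s, a i • xst i) (∑ j ∈ s, b j • zt j)
          ≤ ‖(∑ i ∈ s, a i • xst i) (∑ j ∈ s, b j • zt j)‖ := le_abs_self _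
        _ ≤ ‖∑ i ∈ s, a i • xst i‖ * ‖∑ j ∈ s, b j • zt j‖ :=
            ContinuousLinearMap.le_opNorm _ _
    have h2 := mul_le_mul_of_nonneg_left hvec (norm_nonneg (∑ i ∈ s, a i • xst i))
    linarith
  have hSq : (0:ℝ) < S ^ (1/q) := Real.rpow_pos_of_pos hSpos _
  have hSsplit : S = S ^ (1/q') * S ^ (1/q) := by
    rw [← Real.rpow_add hSpos, show 1/q' + 1/q = 1 from by linarith, Real.rpow_one]
  have h3 : (1/4) * S ^ (1/q') ≤ ‖∑ i ∈ s, a i • xst i‖ * K := by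
    refine le_of_mul_le_mul_right ?_ hSq
    calc (1/4) * S ^ (1/q') * S ^ (1/q) = (1/4) * S := by rw [mul_assoc, ← hSsplit]
      _ ≤ ‖∑ i ∈ s, a i • xst i‖ * (K * S ^ (1/q)) := hFv
      _ = ‖∑ i ∈ s, a i • xst i‖ * K * S ^ (1/q) := by ring
  rw [show (4*K)⁻¹ * S ^ (1/q') = ((1/4) * S ^ (1/q')) / K from by
    field_simp]
  rw [div_le_iff₀ hK]
  linarith


lemma eta_le {i j : ℕ} (hij : i ≤ j) :
    eta (j+1) ≤ (1/100) * (((2:ℝ)⁻¹)^(i+1) * ((2:ℝ)⁻¹)^(j+1)) := by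
  unfold eta
  have h4 : ((4:ℝ)⁻¹)^(j+1) = ((2:ℝ)⁻¹)^(2*(j+1)) := by
    rw [pow_mul]; norm_num
  rw [h4]
  have h2 : ((2:ℝ)⁻¹)^(2*(j+1)) ≤ ((2:ℝ)⁻¹)^((i+1)+(j+1)) :=
    pow_le_pow_of_le_one (by norm_num) (by norm_num) (by omega)
  calc (1/100) * ((2:ℝ)⁻¹)^(2*(j+1)) ≤ (1/100) * ((2:ℝ)⁻¹)^((i+1)+(j+1)) := by
        exact mul_le_mul_of_nonneg_left h2 (by norm_num)
    _ = (1/100) * (((2:ℝ)⁻¹)^(i+1) * ((2:ℝ)⁻¹)^(j+1)) := by rw [pow_add]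


end OSaux

/-- **Lemma 3.5** (Odell–Schlumprecht).  Let `X` have separable dual and `q > 1`.  If
`X` satisfies `K`-`(∞,q)`-tree estimates, then `X^*` satisfies `(q',1)`-w*-tree
estimates with constant `4K`, where `1/q + 1/q' = 1`:  every w*-null tree in `S_{X^*}`
admits a branch `(xᵢ^*)` with `‖∑ aᵢ xᵢ^*‖ ≥ (4K)⁻¹ (∑ |aᵢ|^{q'})^{1/q'}`. -/
theorem statement9 {X : Type*} [NormedAddCommGroup X] [NormedSpace ℝ X] [CompleteSpace X]
    (hsep : TopologicalSpace.SeparableSpace (StrongDual ℝ X))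
    (q q' K : ℝ) (hq : 1 < q) (hq' : 1 / q + 1 / q' = 1) (hK : 0 < K)
    (htree : TreeUpperEst X (ENNReal.ofReal q) K) :
    DualTreeLowerWStarEst X (ENNReal.ofReal q') (4 * K) := by
  classical
  intro xs hxsph hxnull
  haveI : Inhabited X := ⟨0⟩
  have hq0 : (0:ℝ) < q := lt_trans one_pos hq
  have hinvq : 0 < 1/q := by positivity
  have hinvq1 : 1/q < 1 := by rw [div_lt_one hq0]; exact hq
  have hinvq' : 0 < 1/q' := by linarith
  have hq'0 : (0:ℝ) < q' := by
    rcases lt_trichotomy q' 0 with h | h | h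
    · exfalso
      have : 1/q' < 0 := div_neg_of_pos_of_neg one_pos h
      linarith
    · exfalso; rw [h] at hinvq'; simp at hinvq'
    · exact h
  have hsph' : ∀ l : List ℕ, l.Chain' (· < ·) → l ≠ [] → ‖xs l‖ = 1 := hxsph
  have hwnull' : ∀ l : List ℕ, l.Chain' (· < ·) → ∀ v : X,
      Tendsto (fun n => xs (l ++ [n]) v) atTop (𝓝 0) := hxnull
  choose κf wf hnode using fun L fsl vs η => OSaux.node hsep xs hsph' hwnull' L fsl vs η
  have hinv := OSaux.invariants xs κf wf (fun L fsl vs η h =>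
    ⟨(hnode L fsl vs η h).1, (hnode L fsl vs η h).2.1, (hnode L fsl vs η h).2.2.1,
     (hnode L fsl vs η h).2.2.2.1, (hnode L fsl vs η h).2.2.2.2.1⟩)
  -- per-node consequences for chains
  have hsnoc : ∀ l : List ℕ, l.Chain' (· < ·) →
      ∃ κ0 : ℕ → ℕ,
        (∀ n, (OSaux.go xs κf wf (l ++ [n]).reverse).1.reverse
            = (OSaux.go xs κf wf l.reverse).1.reverse ++ [κ0 n]) ∧
        (∀ n, ∀ m ∈ (OSaux.go xs κf wf l.reverse).1.reverse, m < κ0 n) ∧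
        (∀ f : X →L[ℝ] ℝ, Tendsto (fun n =>
            f ((OSaux.go xs κf wf (l ++ [n]).reverse).2.headI)) atTop (𝓝 0)) := by
    intro l hch
    obtain ⟨inv1, inv2, inv3, -⟩ := hinv l hch
    set st := OSaux.go xs κf wf l.reverse with hst
    set fsl := (List.range st.1.length).map (fun i => xs (st.1.reverse.take (i+1))) with hfsl
    set ηv := OSaux.eta (st.2.length + 1) with hηv
    have hgo : ∀ n, OSaux.go xs κf wf (l ++ [n]).reverse =
        (κf st.1.reverse fsl st.2 ηv n :: st.1, wf st.1.reverse fsl st.2 ηv n :: st.2) := by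
      intro n
      rw [show (l ++ [n]).reverse = n :: l.reverse by simp, OSaux.go_cons, ← hst, ← hfsl, ← hηv]
    have H := hnode st.1.reverse fsl st.2 ηv ⟨inv3, OSaux.eta_pos _⟩
    refine ⟨κf st.1.reverse fsl st.2 ηv, ?_, H.1, ?_⟩
    · intro n
      rw [hgo n]
      simp
    · intro f
      refine (H.2.2.2.2.2 f).congr fun n => ?_
      rw [hgo n]
      rfl
  -- the constructed weakly null tree
  have hZsph : TreeInSphere (fun l : List ℕ => (OSaux.go xs κf wf l.reverse).2.headI) := by
    intro l hc hne
    exact (hinv l hc).2.2.2.2.2.1 hne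
  have hZnull : IsWeaklyNullTree (fun l : List ℕ => (OSaux.go xs κf wf l.reverse).2.headI) := by
    intro l hc f
    obtain ⟨κ0, -, -, hwk⟩ := hsnoc l hc
    exact hwk f
  obtain ⟨φ, hφ, hup⟩ := htree _ hZsph hZnull
  set Lst : ℕ → List ℕ := fun i => (List.range (i+1)).map φ with hLst
  have hLstchain : ∀ i, (Lst i).Chain' (· < ·) := fun i =>
    ((List.pairwise_lt_range (n := i+1)).map φ (fun a b h => hφ h)).isChain
  have hLstlen : ∀ i, (Lst i).length = i + 1 := by
    intro i; rw [hLst]; simp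
  have hLstne : ∀ i, Lst i ≠ [] := by
    intro i h
    have := hLstlen i
    rw [h] at this
    simp at this
  have hLstsucc : ∀ i, Lst (i+1) = Lst i ++ [φ (i+1)] := by
    intro i
    rw [hLst]
    simp [List.range_succ]
  have hLstpre : ∀ i j, i < j → Lst i <+: Lst j := by
    intro i j hij
    rw [hLst]
    refine List.IsPrefix.map φ ?_
    have h1 : List.range (i+1) = (List.range (j+1)).take (i+1) := by
      rw [List.take_range]
      congr 1
      omega
    rw [h1]
    exact List.take_prefix _ _
  have hLstnej : ∀ i j, i ≠ j → Lst i ≠ Lst j := by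
    intro i j hij h
    have := congrArg List.length h
    rw [hLstlen, hLstlen] at this
    omega
  set φ' : ℕ → ℕ := fun i => (OSaux.go xs κf wf (Lst i).reverse).1.headI with hφ'
  have hbr : ∀ i, (List.range (i+1)).map φ' = (OSaux.go xs κf wf (Lst i).reverse).1.reverse := by
    intro i
    induction i with
    | zero =>
      obtain ⟨κ0, hΨs, -, -⟩ := hsnoc [] List.isChain_nil
      have h00 : ([]:List ℕ) ++ [φ 0] = Lst 0 := by rw [hLst]; simp [List.range_succ]
      have e1 : (OSaux.go xs κf wf (Lst 0).reverse).1.reverse = [κ0 (φ 0)] := by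
        have h1 := hΨs (φ 0)
        rw [h00] at h1
        rw [h1]
        simp [OSaux.go_nil]
      have e2 := congrArg List.reverse e1
      rw [List.reverse_reverse] at e2
      simp only [List.reverse_singleton] at e2
      have e3 : φ' 0 = κ0 (φ 0) := by
        simp only [hφ']
        rw [e2]
        rfl
      rw [e1]
      simp [List.range_succ, e3]
    | succ i ih =>
      obtain ⟨κ0, hΨs, -, -⟩ := hsnoc (Lst i) (hLstchain i)
      have hsucc := hΨs (φ (i+1))
      rw [← hLstsucc i] at hsucc
      have e2 := congrArg List.reverse hsucc
      rw [List.reverse_reverse, List.reverse_append] at e2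
      simp only [List.reverse_singleton, List.singleton_append] at e2
      have e3 : φ' (i+1) = κ0 (φ (i+1)) := by
        simp only [hφ']
        rw [e2]
        rfl
      rw [List.range_succ, List.map_append]
      simp only [List.map_cons, List.map_nil]
      rw [ih, hsucc, e3]
  have hmono' : StrictMono φ' := by
    apply strictMono_nat_of_lt_succ
    intro i
    obtain ⟨κ0, hΨs, hgt, -⟩ := hsnoc (Lst i) (hLstchain i)
    have hsucc := hΨs (φ (i+1))
    rw [← hLstsucc i] at hsucc
    have e2 := congrArg List.reverse hsucc
    rw [List.reverse_reverse, List.reverse_append] at e2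
    simp only [List.reverse_singleton, List.singleton_append] at e2
    have e3 : φ' (i+1) = κ0 (φ (i+1)) := by
      simp only [hφ']
      rw [e2]
      rfl
    rw [e3]
    apply hgt (φ (i+1))
    have hne2 : (OSaux.go xs κf wf (Lst i).reverse).1 ≠ [] := by
      intro h
      have hlen : (OSaux.go xs κf wf (Lst i).reverse).1.length = (Lst i).length :=
        (hinv (Lst i) (hLstchain i)).1
      rw [h, hLstlen] at hlen
      simp at hlen
    rw [List.mem_reverse]
    simp only [hφ']
    obtain ⟨hd, tl, hcons⟩ := List.exists_cons_of_ne_nil hne2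
    rw [hcons]
    simp
  have hbranchx : ∀ i, branchOf xs φ' i = xs ((OSaux.go xs κf wf (Lst i).reverse).1.reverse) := by
    intro i
    show xs ((List.range (i+1)).map φ') = _
    rw [hbr i]
  refine ⟨φ', hmono', ?_⟩
  intro s a
  have hxeq : ∑ i ∈ s, a i • branchOf xs φ' i
      = ∑ i ∈ s, a i • xs ((OSaux.go xs κf wf (Lst i).reverse).1.reverse) :=
    Finset.sum_congr rfl fun i _ => by rw [hbranchx i]
  have hlp : lpSumOn (ENNReal.ofReal q') s a = (∑ i ∈ s, |a i| ^ q') ^ (1/q') := by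
    rw [lpSumOn, if_neg ENNReal.ofReal_ne_top, ENNReal.toReal_ofReal hq'0.le]
  rw [hxeq, hlp]
  refine OSaux.final_estimate q q' K hq hq' hK
    (fun i => xs ((OSaux.go xs κf wf (Lst i).reverse).1.reverse))
    (fun i => (OSaux.go xs κf wf (Lst i).reverse).2.headI)
    ?_ ?_ ?_ s a
  · intro i
    exact (hinv (Lst i) (hLstchain i)).2.2.2.2.2.2.1 (hLstne i)
  · intro i j hij
    rcases lt_or_gt_of_ne hij with h | h
    · have hcr := ((hinv (Lst j) (hLstchain j)).2.2.2.2.2.2.2 (Lst i)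
        (hLstpre i j h) (hLstne i) (hLstnej i j hij)).1
      rw [hLstlen j] at hcr
      exact hcr.trans (OSaux.eta_le (le_of_lt h))
    · have hcr := ((hinv (Lst i) (hLstchain i)).2.2.2.2.2.2.2 (Lst j)
        (hLstpre j i h) (hLstne j) (hLstnej j i (Ne.symm hij))).2
      rw [hLstlen i] at hcr
      refine hcr.trans ?_
      have := OSaux.eta_le (le_of_lt h)
      calc OSaux.eta (i+1) ≤ (1/100) * (((2:ℝ)⁻¹)^(j+1) * ((2:ℝ)⁻¹)^(i+1)) := this
        _ = (1/100) * (((2:ℝ)⁻¹)^(i+1) * ((2:ℝ)⁻¹)^(j+1)) := by ring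
  · intro t b
    have h1 := hup t b
    rw [lpSumOn, if_neg ENNReal.ofReal_ne_top, ENNReal.toReal_ofReal hq0.le] at h1
    exact h1


end OS

end
end

section
/- Let 1 ≤ q ≤ p ≤ ∞ and let F and G be finite dimensional normed spaces with norms ‖·‖_F and ‖·‖_G. Let |||·||| be a norm on F ⊕ G such that the two-term FDD (F,G) satisfies 1-(p,q)-estimates in (F ⊕ G, |||·|||), and assume there are 1 < c < d < ∞ with c‖f‖_F ≤ |||f||| ≤ d‖f‖_F for all f ∈ F and c‖g‖_G ≤ |||g||| ≤ d‖g‖_G for all g ∈ G. Then there is a norm ‖·‖ on F ⊕ G extending ‖·‖_F and ‖·‖_G such that (F,G) satisfies 1-(p,q)-estimates in (F ⊕ G, ‖·‖) and c‖f+g‖ ≤ |||f+g||| ≤ d‖f+g‖ for all f ∈ F, g ∈ G. -/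
/-! Common definitions for formalizing results of
E. Odell and Th. Schlumprecht,
"Embedding into Banach spaces with finite dimensional decompositions". -/

open Filter Topology
open scoped ENNReal NNReal

noncomputable section

namespace OS

section Lp2Lemmas

private lemma one_le_toReal' {r : ℝ≥0∞} (h1 : 1 ≤ r) (ht : r ≠ ⊤) : 1 ≤ r.toReal := by
  simpa using ENNReal.toReal_mono ht h1

private lemma toReal_pos' {r : ℝ≥0∞} (h1 : 1 ≤ r) (ht : r ≠ ⊤) : 0 < r.toReal :=
  lt_of_lt_of_le one_pos (one_le_toReal' h1 ht)

private lemma lp2_eq_of_nonneg {r : ℝ≥0∞} (ht : r ≠ ⊤) {s t : ℝ} (hs : 0 ≤ s) (h2 : 0 ≤ t) :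
    lp2 r s t = (s ^ r.toReal + t ^ r.toReal) ^ (1 / r.toReal) := by
  simp [lp2, ht, abs_of_nonneg hs, abs_of_nonneg h2]

private lemma lp2_nonneg {r : ℝ≥0∞} {s t : ℝ} (hs : 0 ≤ s) (h2 : 0 ≤ t) :
    0 ≤ lp2 r s t := by
  by_cases ht : r = ⊤
  · simp [lp2, ht]; exact .inl hs
  · rw [lp2_eq_of_nonneg ht hs h2]
    positivity

private lemma lp2_mono {r : ℝ≥0∞} (h1 : 1 ≤ r) {s t s' t' : ℝ} (hs : 0 ≤ s) (h2 : 0 ≤ t)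
    (hss : s ≤ s') (htt : t ≤ t') : lp2 r s t ≤ lp2 r s' t' := by
  by_cases ht : r = ⊤
  · simp only [lp2, ht, if_pos rfl]
    exact max_le_max hss htt
  · rw [lp2_eq_of_nonneg ht hs h2, lp2_eq_of_nonneg ht (hs.trans hss) (h2.trans htt)]
    have he : 0 < r.toReal := toReal_pos' h1 ht
    apply Real.rpow_le_rpow (by positivity) _ (by positivity)
    exact add_le_add (Real.rpow_le_rpow hs hss he.le) (Real.rpow_le_rpow h2 htt he.le)

private lemma lp2_self_left {r : ℝ≥0∞} (h1 : 1 ≤ r) {s : ℝ} (hs : 0 ≤ s) :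
    lp2 r s 0 = s := by
  by_cases ht : r = ⊤
  · simp [lp2, ht, max_eq_left hs]
  · have he : 0 < r.toReal := toReal_pos' h1 ht
    rw [lp2_eq_of_nonneg ht hs le_rfl, Real.zero_rpow he.ne', add_zero, one_div,
      Real.rpow_rpow_inv hs he.ne']

private lemma lp2_self_right {r : ℝ≥0∞} (h1 : 1 ≤ r) {t : ℝ} (h2 : 0 ≤ t) :
    lp2 r 0 t = t := by
  by_cases ht : r = ⊤
  · simp [lp2, ht, max_eq_right h2]
  · have he : 0 < r.toReal := toReal_pos' h1 ht
    rw [lp2_eq_of_nonneg ht le_rfl h2, Real.zero_rpow he.ne', zero_add, one_div,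
      Real.rpow_rpow_inv h2 he.ne']

private lemma lp2_smul {r : ℝ≥0∞} (h1 : 1 ≤ r) {a s t : ℝ} (ha : 0 ≤ a) (hs : 0 ≤ s)
    (h2 : 0 ≤ t) : lp2 r (a * s) (a * t) = a * lp2 r s t := by
  by_cases ht : r = ⊤
  · simp only [lp2, ht, if_pos rfl]
    exact (mul_max_of_nonneg _ _ ha).symm
  · have he : 0 < r.toReal := toReal_pos' h1 ht
    rw [lp2_eq_of_nonneg ht (by positivity) (by positivity), lp2_eq_of_nonneg ht hs h2,
      Real.mul_rpow ha hs, Real.mul_rpow ha h2, ← mul_add,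
      Real.mul_rpow (by positivity) (by positivity), one_div,
      Real.rpow_rpow_inv ha he.ne']

private lemma lp2_add_le {r : ℝ≥0∞} (h1 : 1 ≤ r) {s t s' t' : ℝ} (hs : 0 ≤ s) (h2 : 0 ≤ t)
    (hs' : 0 ≤ s') (h2' : 0 ≤ t') :
    lp2 r (s + s') (t + t') ≤ lp2 r s t + lp2 r s' t' := by
  by_cases ht : r = ⊤
  · simp only [lp2, ht, if_pos rfl]
    exact max_le (add_le_add (le_max_left _ _) (le_max_left _ _))
      (add_le_add (le_max_right _ _) (le_max_right _ _))
  · have he : 1 ≤ r.toReal := one_le_toReal' h1 ht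
    rw [lp2_eq_of_nonneg ht (by positivity) (by positivity), lp2_eq_of_nonneg ht hs h2,
      lp2_eq_of_nonneg ht hs' h2']
    have := Real.Lp_add_le_of_nonneg (s := (Finset.univ : Finset (Fin 2)))
      (f := ![s, t]) (g := ![s', t']) he
      (by intro i _; fin_cases i <;> assumption)
      (by intro i _; fin_cases i <;> assumption)
    simpa [Fin.sum_univ_two] using this

private lemma lp2_anti {r r' : ℝ≥0∞} (h1 : 1 ≤ r) (hrr : r ≤ r') {s t : ℝ} (hs : 0 ≤ s)
    (h2 : 0 ≤ t) : lp2 r' s t ≤ lp2 r s t := by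
  by_cases ht : r = ⊤
  · subst ht
    exact le_of_eq (by rw [top_le_iff.mp hrr])
  · have hr0 : 0 < r.toReal := toReal_pos' h1 ht
    have key : ∀ u v : ℝ, 0 ≤ u → 0 ≤ v →
        u ≤ (u ^ r.toReal + v ^ r.toReal) ^ (1 / r.toReal) := by
      intro u v hu hv
      calc u = (u ^ r.toReal) ^ (1 / r.toReal) := by
            rw [one_div, Real.rpow_rpow_inv hu hr0.ne']
        _ ≤ (u ^ r.toReal + v ^ r.toReal) ^ (1 / r.toReal) :=
            Real.rpow_le_rpow (by positivity) (le_add_of_nonneg_right (by positivity))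
              (by positivity)
    by_cases ht' : r' = ⊤
    · subst ht'
      rw [lp2_eq_of_nonneg ht hs h2, show lp2 ⊤ s t = max s t from by simp [lp2]]
      refine max_le (key s t hs h2) ?_
      have := key t s h2 hs
      rwa [add_comm] at this
    · have hrr' : r.toReal ≤ r'.toReal := ENNReal.toReal_mono ht' hrr
      rw [lp2_eq_of_nonneg ht hs h2, lp2_eq_of_nonneg ht' hs h2]
      have h3 := NNReal.rpow_add_rpow_le (p := r.toReal) (q := r'.toReal)
        ⟨s, hs⟩ ⟨t, h2⟩ hr0 hrr'
      have h' := NNReal.coe_le_coe.mpr h3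
      push_cast [NNReal.coe_rpow] at h'
      exact h'

end Lp2Lemmas




/-- **Lemma 5.1** (Odell–Schlumprecht).  Let `1 ≤ q ≤ p ≤ ∞` and let `F`, `G` be
finite dimensional normed spaces.  Let `|||·|||` (here `T`) be a norm on `F ⊕ G` for
which the two-term FDD `(F, G)` satisfies `1`-`(p,q)`-estimates, and suppose
`c ‖f‖_F ≤ |||f||| ≤ d ‖f‖_F` and `c ‖g‖_G ≤ |||g||| ≤ d ‖g‖_G` for some
`1 < c < d < ∞`.  Then there is a norm `‖·‖` (here `N`) on `F ⊕ G` extending `‖·‖_F`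
and `‖·‖_G`, for which `(F, G)` satisfies `1`-`(p,q)`-estimates and
`c ‖f+g‖ ≤ |||f+g||| ≤ d ‖f+g‖`. -/
theorem statement17 (p q : ℝ≥0∞) (hq : 1 ≤ q) (hqp : q ≤ p)
    {F G : Type*} [NormedAddCommGroup F] [NormedSpace ℝ F] [FiniteDimensional ℝ F]
    [NormedAddCommGroup G] [NormedSpace ℝ G] [FiniteDimensional ℝ G]
    (T : F × G → ℝ) (hT : IsNormOn (F × G) T)
    (hpqest : ∀ (f : F) (g : G),
      lp2 p (T (f, 0)) (T (0, g)) ≤ T (f, g) ∧ T (f, g) ≤ lp2 q (T (f, 0)) (T (0, g)))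
    (c d : ℝ) (hc : 1 < c) (hcd : c < d)
    (hF : ∀ f : F, c * ‖f‖ ≤ T (f, 0) ∧ T (f, 0) ≤ d * ‖f‖)
    (hG : ∀ g : G, c * ‖g‖ ≤ T (0, g) ∧ T (0, g) ≤ d * ‖g‖) :
    ∃ N : F × G → ℝ, IsNormOn (F × G) N ∧
      (∀ f : F, N (f, 0) = ‖f‖) ∧ (∀ g : G, N (0, g) = ‖g‖) ∧
      (∀ (f : F) (g : G),
        lp2 p (N (f, 0)) (N (0, g)) ≤ N (f, g) ∧ N (f, g) ≤ lp2 q (N (f, 0)) (N (0, g))) ∧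
      ∀ w : F × G, c * N w ≤ T w ∧ T w ≤ d * N w := by
  have hp1 : 1 ≤ p := hq.trans hqp
  have hc0 : 0 < c := lt_trans one_pos hc
  have hd0 : 0 < d := lt_trans hc0 hcd
  have hTn : ∀ w : F × G, 0 ≤ T w := by
    intro w
    rcases eq_or_ne w 0 with h | h
    · simp [h, hT.zero]
    · exact (hT.pos w h).le
  set N : F × G → ℝ := fun w => max (T w / d) (lp2 p ‖w.1‖ ‖w.2‖) with hN
  have hNf : ∀ f : F, N (f, 0) = ‖f‖ := by
    intro f
    have h1 : lp2 p ‖f‖ ‖(0 : G)‖ = ‖f‖ := by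
      rw [norm_zero]; exact lp2_self_left hp1 (norm_nonneg f)
    have h2 : T (f, 0) / d ≤ ‖f‖ := (div_le_iff₀' hd0).mpr (hF f).2
    simp only [hN]
    rw [h1]
    exact max_eq_right h2
  have hNg : ∀ g : G, N (0, g) = ‖g‖ := by
    intro g
    have h1 : lp2 p ‖(0 : F)‖ ‖g‖ = ‖g‖ := by
      rw [norm_zero]; exact lp2_self_right hp1 (norm_nonneg g)
    have h2 : T (0, g) / d ≤ ‖g‖ := (div_le_iff₀' hd0).mpr (hG g).2
    simp only [hN]
    rw [h1]
    exact max_eq_right h2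
  have hTd : ∀ w : F × G, T w / d ≤ N w := fun w => le_max_left _ _
  have hAle : ∀ w : F × G, lp2 p ‖w.1‖ ‖w.2‖ ≤ N w := fun w => le_max_right _ _
  refine ⟨N, ?_, hNf, hNg, ?_, ?_⟩
  · constructor
    · intro w hw
      exact lt_of_lt_of_le (div_pos (hT.pos w hw) hd0) (hTd w)
    · simp only [hN]
      have : lp2 p ‖(0 : F × G).1‖ ‖(0 : F × G).2‖ = 0 := by
        simp only [Prod.fst_zero, Prod.snd_zero, norm_zero]
        exact lp2_self_left hp1 le_rfl
      rw [this, hT.zero, zero_div, max_self]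
    · intro a w
      simp only [hN, Prod.smul_fst, Prod.smul_snd, norm_smul, Real.norm_eq_abs,
        hT.smul a w]
      rw [lp2_smul hp1 (abs_nonneg a) (norm_nonneg _) (norm_nonneg _),
        mul_div_assoc, mul_max_of_nonneg _ _ (abs_nonneg a)]
    · intro w w'
      simp only [hN]
      apply max_le
      · calc T (w + w') / d ≤ (T w + T w') / d := by
              gcongr
              exact hT.add w w'
          _ = T w / d + T w' / d := add_div _ _ _
          _ ≤ N w + N w' := add_le_add (hTd w) (hTd w')
      · calc lp2 p ‖(w + w').1‖ ‖(w + w').2‖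
            ≤ lp2 p (‖w.1‖ + ‖w'.1‖) (‖w.2‖ + ‖w'.2‖) :=
              lp2_mono hp1 (norm_nonneg _) (norm_nonneg _) (norm_add_le _ _) (norm_add_le _ _)
          _ ≤ lp2 p ‖w.1‖ ‖w.2‖ + lp2 p ‖w'.1‖ ‖w'.2‖ :=
              lp2_add_le hp1 (norm_nonneg _) (norm_nonneg _) (norm_nonneg _) (norm_nonneg _)
          _ ≤ N w + N w' := add_le_add (hAle w) (hAle w')
  · intro f g
    rw [hNf f, hNg g]
    constructor
    · exact hAle (f, g)
    · apply max_le
      · have h1 : T (f, g) ≤ lp2 q (T (f, 0)) (T (0, g)) := (hpqest f g).2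
        have h2 : lp2 q (T (f, 0)) (T (0, g)) ≤ lp2 q (d * ‖f‖) (d * ‖g‖) :=
          lp2_mono hq (hTn _) (hTn _) (hF f).2 (hG g).2
        have h3 : lp2 q (d * ‖f‖) (d * ‖g‖) = d * lp2 q ‖f‖ ‖g‖ :=
          lp2_smul hq hd0.le (norm_nonneg f) (norm_nonneg g)
        rw [div_le_iff₀' hd0]
        calc T (f, g) ≤ lp2 q (d * ‖f‖) (d * ‖g‖) := h1.trans h2
          _ = d * lp2 q ‖f‖ ‖g‖ := h3
      · exact lp2_anti hq hqp (norm_nonneg f) (norm_nonneg g)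
  · intro w
    constructor
    · rw [hN, mul_max_of_nonneg _ _ hc0.le]
      apply max_le
      · rw [mul_div_assoc', mul_comm, mul_div_assoc]
        exact mul_le_of_le_one_right (hTn w) ((div_le_one hd0).mpr hcd.le)
      · calc c * lp2 p ‖w.1‖ ‖w.2‖ = lp2 p (c * ‖w.1‖) (c * ‖w.2‖) :=
              (lp2_smul hp1 hc0.le (norm_nonneg _) (norm_nonneg _)).symm
          _ ≤ lp2 p (T (w.1, 0)) (T (0, w.2)) :=
              lp2_mono hp1 (by positivity) (by positivity) (hF w.1).1 (hG w.2).1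
          _ ≤ T (w.1, w.2) := (hpqest w.1 w.2).1
          _ = T w := by rw [Prod.mk.eta]
    · calc T w = d * (T w / d) := by field_simp
        _ ≤ d * N w := mul_le_mul_of_nonneg_left (hTd w) hd0.le

end OS

end
end
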